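/- Let r ≥ 1 be an integer and let H be a 3-uniform marked hypergraph that is not a trivial Maker win, with |V(H)∖M(H)| ≥ 2r. Define predicates W_k on marked hypergraphs by: W_0(H') holds iff H' contains a fully marked edge (an e ∈ E(H') with e ⊆ M(H')), a nunchaku, or a necklace as a subhypergraph; and for k ≥ 1, W_k(H') holds iff there exists x ∈ V(H')∖M(H') such that for all y ∈ V(H'^{+x})∖M(H'^{+x}), W_{k−1}(H'^{+x-y}) holds. Then J_r(𝒟_0,H) does not hold if and only if W_r(H) holds (i.e., Maker can force that after r rounds of play the updated marked hypergraph contains a fully marked edge, a nunchaku or a necklace). -/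
import Mathlib


namespace MB

/-- A marked hypergraph: a finite vertex set, an edge set of finite subsets of vertices,
and a set of marked vertices. -/
structure MarkedHypergraph (V : Type) where
  verts : Finset V
  edges : Finset (Finset V)
  marked : Finset V

namespace MarkedHypergraph

variable {V : Type} [DecidableEq V]

/-- The structural requirements on a marked hypergraph: nonempty vertex set, edges are
nonempty subsets of the vertex set, marked vertices are vertices. -/
def IsValid (H : MarkedHypergraph V) : Prop :=
  H.verts.Nonempty ∧ (∀ e ∈ H.edges, e ⊆ H.verts ∧ e.Nonempty) ∧ H.marked ⊆ H.verts

/-- `k`-uniformity: every edge has exactly `k` vertices. -/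
def IsUniform (H : MarkedHypergraph V) (k : ℕ) : Prop :=
  ∀ e ∈ H.edges, e.card = k

/-- `H^{+x}`: mark the vertex `x`. -/
def plus (H : MarkedHypergraph V) (x : V) : MarkedHypergraph V :=
  ⟨H.verts, H.edges, insert x H.marked⟩

/-- `H^{-y}`: remove the vertex `y` and all edges containing it. -/
def minus (H : MarkedHypergraph V) (y : V) : MarkedHypergraph V :=
  ⟨H.verts.erase y, H.edges.filter fun e => y ∉ e, H.marked.erase y⟩

/-- `X` is a subhypergraph of `H`. -/
def IsSub (X H : MarkedHypergraph V) : Prop :=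
  X.verts ⊆ H.verts ∧ X.edges ⊆ H.edges ∧ X.marked = X.verts ∩ H.marked

/-- A trivial Maker win: some edge has at most one non-marked vertex. -/
def TrivialMakerWin (H : MarkedHypergraph V) : Prop :=
  ∃ e ∈ H.edges, (e \ H.marked).card ≤ 1

theorem card_free_lt (H : MarkedHypergraph V) (x y : V)
    (hy : y ∈ (H.plus x).verts \ (H.plus x).marked) :
    (((H.plus x).minus y).verts \ ((H.plus x).minus y).marked).card
      < (H.verts \ H.marked).card := by
  have hy' : y ∈ H.verts \ insert x H.marked := hy
  rw [Finset.mem_sdiff] at hy'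
  have hyv : y ∈ H.verts := hy'.1
  have hym : y ∉ H.marked := fun h => hy'.2 (Finset.mem_insert_of_mem h)
  show (H.verts.erase y \ (insert x H.marked).erase y).card < (H.verts \ H.marked).card
  calc (H.verts.erase y \ (insert x H.marked).erase y).card
      ≤ ((H.verts \ H.marked).erase y).card := by
        apply Finset.card_le_card
        intro v hv
        rw [Finset.mem_sdiff, Finset.mem_erase] at hv
        rw [Finset.mem_erase, Finset.mem_sdiff]
        exact ⟨hv.1.1, hv.1.2, fun hvm =>
          hv.2 (Finset.mem_erase.mpr ⟨hv.1.1, Finset.mem_insert_of_mem hvm⟩)⟩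
    _ < (H.verts \ H.marked).card :=
        Finset.card_erase_lt_of_mem (Finset.mem_sdiff.mpr ⟨hyv, hym⟩)

/-- Maker win, defined by recursion on the number of non-marked vertices:
if at most one non-marked vertex remains, Maker wins iff the position is a trivial Maker
win; otherwise Maker wins iff he has a pick `x` such that for every answer `y` of Breaker,
the resulting position is a Maker win. -/
def MakerWin (H : MarkedHypergraph V) : Prop :=
  if (H.verts \ H.marked).card ≤ 1 then TrivialMakerWin H
  else ∃ x ∈ H.verts \ H.marked,
    ∀ y ∈ (H.plus x).verts \ (H.plus x).marked, MakerWin ((H.plus x).minus y)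
termination_by (H.verts \ H.marked).card
decreasing_by exact card_free_lt H _ _ (by assumption)

/-- Breaker win: not a Maker win. -/
def BreakerWin (H : MarkedHypergraph V) : Prop := ¬ H.MakerWin

open Classical in
/-- `τ_M(H)`: the minimum number of rounds Maker needs to claim a fully marked edge
(`⊤` if Breaker wins). -/
noncomputable def tauM (H : MarkedHypergraph V) : ℕ∞ :=
  if TrivialMakerWin H then H.edges.inf fun e => ((e \ H.marked).card : ℕ∞)
  else if (H.verts \ H.marked).card ≤ 1 then (⊤ : ℕ∞)
  else 1 + (H.verts \ H.marked).inf fun x =>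
    ((H.plus x).verts \ (H.plus x).marked).attach.sup fun y =>
      tauM ((H.plus x).minus y.1)
termination_by (H.verts \ H.marked).card
decreasing_by exact card_free_lt H _ _ y.2

end MarkedHypergraph

open MarkedHypergraph

variable {V : Type} [DecidableEq V]

/-- The intersection `I_H(𝒳)` of a collection `𝒳` of marked hypergraphs in `H`. -/
def inter (H : MarkedHypergraph V) (𝒳 : Set (MarkedHypergraph V)) : Set V :=
  {y | y ∈ H.verts ∧ y ∉ H.marked ∧ ∀ X ∈ 𝒳, y ∈ X.verts}

/-- The union of a finite collection of marked hypergraphs. -/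
def unionOf (O : Finset (MarkedHypergraph V)) : MarkedHypergraph V :=
  ⟨O.sup MarkedHypergraph.verts, O.sup MarkedHypergraph.edges, O.sup MarkedHypergraph.marked⟩

/-- Isomorphism of pointed marked hypergraphs. -/
def PointedIso (X : MarkedHypergraph V) (x : V) (Y : MarkedHypergraph V) (y : V) : Prop :=
  ∃ φ : V → V, Set.InjOn φ ↑X.verts ∧ X.verts.image φ = Y.verts ∧
    (∀ e : Finset V, e ⊆ X.verts → (e ∈ X.edges ↔ e.image φ ∈ Y.edges)) ∧
    (∀ v ∈ X.verts, (v ∈ X.marked ↔ φ v ∈ Y.marked)) ∧ φ x = y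

/-- `(D,x)` is a danger: `x` is a non-marked vertex and `D^{+x}` is a Maker win. -/
def IsDanger (D : MarkedHypergraph V) (x : V) : Prop :=
  x ∈ D.verts ∧ x ∉ D.marked ∧ (D.plus x).MakerWin

/-- A family of dangers: a set of pointed marked hypergraphs, all of which are dangers. -/
def IsDangerFamily (F : Set (MarkedHypergraph V × V)) : Prop :=
  ∀ p ∈ F, IsDanger p.1 p.2

/-- The collection of all dangers at `x` in `H`: subhypergraphs `D` of `H` containing `x`
such that `D^{+x}` is a Maker win. -/
def dangersAt (H : MarkedHypergraph V) (x : V) : Set (MarkedHypergraph V) :=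
  {D | D.IsValid ∧ D.IsSub H ∧ x ∈ D.verts ∧ (D.plus x).MakerWin}

/-- `xℱ(H)`: the collection of subhypergraphs `X` of `H` containing `x` such that `(X,x)`
is isomorphic to a member of the family `F`. -/
def xFam (F : Set (MarkedHypergraph V × V)) (H : MarkedHypergraph V) (x : V) :
    Set (MarkedHypergraph V) :=
  {X | X.IsValid ∧ X.IsSub H ∧ x ∈ X.verts ∧ ∃ p ∈ F, PointedIso X x p.1 p.2}

/-- `J F r H` is the property `J_r(ℱ,H)` (for `r ≥ 1`; `J F 0 H` is `True` by convention). -/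
def J (F : Set (MarkedHypergraph V × V)) : ℕ → MarkedHypergraph V → Prop
  | 0, _ => True
  | r + 1, H => ∀ x ∈ H.verts \ H.marked,
      ∃ y ∈ inter (H.plus x) (xFam F H x), J F r ((H.plus x).minus y)

/-- `P` is an `ab`-path (in a 3-uniform setting) of length `L`. -/
def IsPathLen (P : MarkedHypergraph V) (a b : V) (L : ℕ) : Prop :=
  (L = 0 ∧ a = b ∧ P.verts = {a} ∧ P.edges = ∅) ∨
  (1 ≤ L ∧ a ≠ b ∧ ∃ e : ℕ → Finset V,
    P.edges = (Finset.range L).image e ∧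
    P.verts = (Finset.range L).biUnion e ∧
    (∀ i, i < L → (e i).card = 3) ∧
    (∀ i j, i < L → j < L → i ≠ j → e i ≠ e j) ∧
    a ∈ e 0 ∧ b ∈ e (L - 1) ∧
    (∀ i, i + 1 < L → (e i ∩ e (i + 1)).card = 1) ∧
    (∀ i j, i + 2 ≤ j → j < L → e i ∩ e j = ∅) ∧
    (∀ i, 1 ≤ i → i < L → a ∉ e i) ∧
    (∀ i, i + 1 < L → b ∉ e i))

/-- `P` is an `ab`-path. -/
def IsPath (P : MarkedHypergraph V) (a b : V) : Prop := ∃ L, IsPathLen P a b L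

/-- `C` is an `a`-cycle of length `L`. -/
def IsCycleLen (C : MarkedHypergraph V) (a : V) (L : ℕ) : Prop :=
  2 ≤ L ∧ ∃ e : ℕ → Finset V,
    C.edges = (Finset.range L).image e ∧
    C.verts = (Finset.range L).biUnion e ∧
    (∀ i, i < L → (e i).card = 3) ∧
    (∀ i j, i < L → j < L → i ≠ j → e i ≠ e j) ∧
    a ∈ e 0 ∧ a ∈ e (L - 1) ∧
    (∀ i, 0 < i → i + 1 < L → a ∉ e i) ∧
    (L = 2 → (e 0 ∩ e 1).card = 2) ∧
    (3 ≤ L → (e 0 ∩ e (L - 1) = {a} ∧ ∀ i, i + 1 < L → (e i ∩ e (i + 1)).card = 1)) ∧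
    (∀ i j, i < j → j < L → 2 ≤ j - i → j - i ≤ L - 2 → e i ∩ e j = ∅)

/-- `C` is an `a`-cycle. -/
def IsCycle (C : MarkedHypergraph V) (a : V) : Prop := ∃ L, IsCycleLen C a L

/-- `T` is an `a`-tadpole: the union of an `ab`-path and a `b`-cycle meeting only at `b`. -/
def IsTadpole (T : MarkedHypergraph V) (a : V) : Prop :=
  ∃ b P C, IsPath P a b ∧ IsCycle C b ∧ P.verts ∩ C.verts = {b} ∧
    T.verts = P.verts ∪ C.verts ∧ T.edges = P.edges ∪ C.edges

/-- `S` is an `x`-snake: an `xm`-path of positive length with `m` marked. -/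
def IsSnake (S : MarkedHypergraph V) (x : V) : Prop :=
  ∃ m L, 1 ≤ L ∧ IsPathLen S x m L ∧ m ∈ S.marked

/-- `N` is a nunchaku: an `ab`-path of positive length with marked set exactly `{a,b}`. -/
def IsNunchaku (N : MarkedHypergraph V) : Prop :=
  ∃ a b L, 1 ≤ L ∧ IsPathLen N a b L ∧ N.marked = {a, b}

/-- `C` is an `a`-necklace: an `a`-cycle with marked set exactly `{a}`. -/
def IsNecklace (C : MarkedHypergraph V) (a : V) : Prop :=
  ∃ L, IsCycleLen C a L ∧ C.marked = {a}

/-- The family `𝒮` of pointed snakes with exactly one marked vertex. -/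
def famS : Set (MarkedHypergraph V × V) := {p | IsSnake p.1 p.2 ∧ p.1.marked.card = 1}

/-- The family `𝒞` of pointed cycles with no marked vertex. -/
def famC : Set (MarkedHypergraph V × V) := {p | IsCycle p.1 p.2 ∧ p.1.marked = ∅}

/-- The family `𝒯` of pointed tadpoles with no marked vertex. -/
def famT : Set (MarkedHypergraph V × V) := {p | IsTadpole p.1 p.2 ∧ p.1.marked = ∅}

/-- `𝒟₀ = 𝒮 ∪ 𝒞`. -/
def famD0 : Set (MarkedHypergraph V × V) := famS ∪ famC

/-- `𝒟₁ = 𝒮 ∪ 𝒯`. -/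
def famD1 : Set (MarkedHypergraph V × V) := famS ∪ famT

/-- `obs(ℱ)`: pointed marked hypergraphs `(D,x)` which, for some `ℱ`-dangerous vertex `z`,
are the union of a collection `𝒪` of subhypergraphs, each of which is (or becomes, once `x`
is marked) an `ℱ`-danger at `z`, with `I_{D^{+x+z}}(𝒪) = ∅`. -/
def obs (F : Set (MarkedHypergraph V × V)) : Set (MarkedHypergraph V × V) :=
  {p | p.2 ∈ p.1.verts ∧ p.2 ∉ p.1.marked ∧
    ∃ z, z ∈ p.1.verts ∧ z ∉ p.1.marked ∧ z ≠ p.2 ∧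
      ∃ O : Set (MarkedHypergraph V),
        (∀ X ∈ O, X.IsValid ∧ X.IsSub p.1) ∧
        (∀ X ∈ O, p.2 ∈ X.verts → X.plus p.2 ∈ xFam F (p.1.plus p.2) z) ∧
        (∀ X ∈ O, p.2 ∉ X.verts → X ∈ xFam F p.1 z) ∧
        (∀ v ∈ p.1.verts, ∃ X ∈ O, v ∈ X.verts) ∧
        (∀ e ∈ p.1.edges, ∃ X ∈ O, e ∈ X.edges) ∧
        (∀ m ∈ p.1.marked, ∃ X ∈ O, m ∈ X.marked) ∧
        inter ((p.1.plus p.2).plus z) O = ∅}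

/-- `obsr(ℱ)`: the members `(D,x)` of `obs(ℱ)` such that `D` contains no `ℱ`-danger at `x`. -/
def obsr (F : Set (MarkedHypergraph V × V)) : Set (MarkedHypergraph V × V) :=
  {p | p ∈ obs F ∧ xFam F p.1 p.2 = ∅}

/-- `ℱ^{*r}`. -/
def star (F : Set (MarkedHypergraph V × V)) : ℕ → Set (MarkedHypergraph V × V)
  | 0 => F
  | r + 1 => F ∪ obs (star F r)

/-- `𝒟₂ = 𝒟₁ ∪ obsr(𝒟₁)`. -/
def famD2 : Set (MarkedHypergraph V × V) := famD1 ∪ obsr famD1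

/-- The lengths of nunchakus contained in `H`. -/
def nunchakuLengths (H : MarkedHypergraph V) : Set ℕ :=
  {L | 1 ≤ L ∧ ∃ N a b, N.IsSub H ∧ IsPathLen N a b L ∧ N.marked = {a, b}}

/-- `H` contains a fully marked edge, a nunchaku, or a necklace. -/
def WinPattern (H : MarkedHypergraph V) : Prop :=
  (∃ e ∈ H.edges, e ⊆ H.marked) ∨ (∃ N, N.IsSub H ∧ IsNunchaku N) ∨
    (∃ C a, C.IsSub H ∧ IsNecklace C a)

/-- `Wk k H`: Maker can force that after `k` rounds of play the updated marked hypergraph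
contains a fully marked edge, a nunchaku or a necklace. -/
def Wk : ℕ → MarkedHypergraph V → Prop
  | 0, H => WinPattern H
  | k + 1, H => ∃ x ∈ H.verts \ H.marked,
      ∀ y ∈ (H.plus x).verts \ (H.plus x).marked, Wk k ((H.plus x).minus y)

end MB

-- AUX START
namespace MB
open MarkedHypergraph
variable {V : Type} [DecidableEq V]

/-! ### Basic bookkeeping -/

lemma free_pm (H : MarkedHypergraph V) (x y : V) :
    ((H.plus x).minus y).verts \ ((H.plus x).minus y).marked
      = ((H.verts \ H.marked).erase x).erase y := by
  ext v
  simp only [plus, minus, Finset.mem_sdiff, Finset.mem_erase, Finset.mem_insert]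
  tauto

lemma free_plus_iff (H : MarkedHypergraph V) (x v : V) :
    v ∈ (H.plus x).verts \ (H.plus x).marked ↔ v ∈ H.verts \ H.marked ∧ v ≠ x := by
  simp only [plus, Finset.mem_sdiff, Finset.mem_insert]
  tauto

lemma card_free_pm (H : MarkedHypergraph V) {x y : V} (hx : x ∈ H.verts \ H.marked)
    (hy : y ∈ H.verts \ H.marked) (hxy : y ≠ x) :
    (((H.plus x).minus y).verts \ ((H.plus x).minus y).marked).card
      = (H.verts \ H.marked).card - 2 := by
  rw [free_pm, Finset.card_erase_of_mem (Finset.mem_erase.mpr ⟨hxy, hy⟩),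
    Finset.card_erase_of_mem hx]
  omega

lemma valid_pm {H : MarkedHypergraph V} (hval : H.IsValid) {x y : V}
    (hx : x ∈ H.verts) (hxy : x ≠ y) : ((H.plus x).minus y).IsValid := by
  obtain ⟨-, hE, hM⟩ := hval
  refine ⟨⟨x, Finset.mem_erase.mpr ⟨hxy, hx⟩⟩, ?_, ?_⟩
  · intro e he
    simp only [plus, minus, Finset.mem_filter] at he
    refine ⟨fun v hv => Finset.mem_erase.mpr ⟨fun h => he.2 (h ▸ hv), (hE e he.1).1 hv⟩,
      (hE e he.1).2⟩
  · intro v hv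
    simp only [plus, minus, Finset.mem_erase, Finset.mem_insert] at hv ⊢
    exact ⟨hv.1, hv.2.elim (fun h => h ▸ hx) (fun h => hM h)⟩

lemma unif_pm {H : MarkedHypergraph V} (h : H.IsUniform 3) (x y : V) :
    ((H.plus x).minus y).IsUniform 3 := by
  intro e he
  simp only [plus, minus, Finset.mem_filter] at he
  exact h e he.1

lemma not_triv_iff {H : MarkedHypergraph V} :
    ¬ H.TrivialMakerWin ↔ ∀ e ∈ H.edges, 2 ≤ (e \ H.marked).card := by
  unfold TrivialMakerWin
  push_neg
  exact forall₂_congr fun e he => by omega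

/-! ### Path and cycle basics -/

lemma path_endpoints {P : MarkedHypergraph V} {a b : V} {L : ℕ}
    (h : IsPathLen P a b L) : a ∈ P.verts ∧ b ∈ P.verts := by
  rcases h with ⟨-, hab, hV, -⟩ | ⟨hL, hab, e, hE, hV, h3, hd, ha, hb, _⟩
  · subst hab; rw [hV]; simp
  · constructor
    · rw [hV]; exact Finset.mem_biUnion.mpr ⟨0, Finset.mem_range.mpr hL, ha⟩
    · rw [hV]; exact Finset.mem_biUnion.mpr ⟨L - 1, Finset.mem_range.mpr (by omega), hb⟩

lemma path_edges_sub {P : MarkedHypergraph V} {a b : V} {L : ℕ}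
    (h : IsPathLen P a b L) : ∀ f ∈ P.edges, f ⊆ P.verts ∧ f.card = 3 := by
  rcases h with ⟨-, -, -, hE⟩ | ⟨hL, hab, e, hE, hV, h3, -⟩
  · intro f hf; rw [hE] at hf; exact absurd hf (Finset.notMem_empty f)
  · intro f hf
    rw [hE] at hf
    obtain ⟨i, hi, rfl⟩ := Finset.mem_image.mp hf
    rw [Finset.mem_range] at hi
    refine ⟨?_, h3 i hi⟩
    rw [hV]; exact fun v hv => Finset.mem_biUnion.mpr ⟨i, Finset.mem_range.mpr hi, hv⟩

lemma cycle_endpoints {P : MarkedHypergraph V} {a : V} {L : ℕ}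
    (h : IsCycleLen P a L) : a ∈ P.verts := by
  obtain ⟨hL, e, hE, hV, h3, hd, ha, -⟩ := h
  rw [hV]; exact Finset.mem_biUnion.mpr ⟨0, Finset.mem_range.mpr (by omega), ha⟩

lemma cycle_edges_sub {P : MarkedHypergraph V} {a : V} {L : ℕ}
    (h : IsCycleLen P a L) : ∀ f ∈ P.edges, f ⊆ P.verts ∧ f.card = 3 := by
  obtain ⟨hL, e, hE, hV, h3, -⟩ := h
  intro f hf
  rw [hE] at hf
  obtain ⟨i, hi, rfl⟩ := Finset.mem_image.mp hf
  rw [Finset.mem_range] at hi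
  refine ⟨?_, h3 i hi⟩
  rw [hV]; exact fun v hv => Finset.mem_biUnion.mpr ⟨i, Finset.mem_range.mpr hi, hv⟩

lemma pathlen_congr {P Q : MarkedHypergraph V} {a b : V} {L : ℕ}
    (hv : P.verts = Q.verts) (he : P.edges = Q.edges)
    (h : IsPathLen P a b L) : IsPathLen Q a b L := by
  unfold IsPathLen at h ⊢; rw [← hv, ← he]; exact h

lemma cyclelen_congr {P Q : MarkedHypergraph V} {a : V} {L : ℕ}
    (hv : P.verts = Q.verts) (he : P.edges = Q.edges)
    (h : IsCycleLen P a L) : IsCycleLen Q a L := by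
  unfold IsCycleLen at h ⊢; rw [← hv, ← he]; exact h

lemma pathlen_rev {P : MarkedHypergraph V} {a b : V} {L : ℕ}
    (h : IsPathLen P a b L) : IsPathLen P b a L := by
  rcases h with ⟨h0, rfl, hV, hE⟩ | ⟨hL, hab, e, hE, hV, h3, hd, ha, hb, hcons, hfar, hano, hbno⟩
  · exact Or.inl ⟨h0, rfl, hV, hE⟩
  · refine Or.inr ⟨hL, hab.symm, fun i => e (L - 1 - i), ?_, ?_, ?_, ?_, hb, ?_, ?_, ?_, ?_, ?_⟩
    · rw [hE]
      apply Finset.ext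
      intro f
      simp only [Finset.mem_image, Finset.mem_range]
      constructor
      · rintro ⟨i, hi, rfl⟩; exact ⟨L - 1 - i, by omega, by congr 1; omega⟩
      · rintro ⟨i, hi, rfl⟩; exact ⟨L - 1 - i, by omega, rfl⟩
    · rw [hV]
      apply Finset.ext
      intro v
      simp only [Finset.mem_biUnion, Finset.mem_range]
      constructor
      · rintro ⟨i, hi, hv⟩; exact ⟨L - 1 - i, by omega, by rwa [show L - 1 - (L - 1 - i) = i by omega]⟩
      · rintro ⟨i, hi, hv⟩; exact ⟨L - 1 - i, by omega, hv⟩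
    · intro i hi; exact h3 _ (by omega)
    · intro i j hi hj hij hcontra
      exact hd _ _ (by omega) (by omega) (by omega) hcontra
    · show a ∈ e (L - 1 - (L - 1))
      rw [show L - 1 - (L - 1) = 0 by omega]; exact ha
    · intro i hi
      show (e (L - 1 - i) ∩ e (L - 1 - (i + 1))).card = 1
      rw [show L - 1 - i = (L - 1 - (i + 1)) + 1 by omega, Finset.inter_comm]
      exact hcons _ (by omega)
    · intro i j hij hj
      show e (L - 1 - i) ∩ e (L - 1 - j) = ∅
      rw [Finset.inter_comm]
      exact hfar _ _ (by omega) (by omega)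
    · intro i h1 hi
      show b ∉ e (L - 1 - i)
      exact hbno _ (by omega)
    · intro i hi
      show a ∉ e (L - 1 - i)
      exact hano _ (by omega) (by omega)

/-! ### Pointed isomorphisms -/

lemma PointedIso.symm' {X Y : MarkedHypergraph V} {x y : V}
    (h : PointedIso X x Y y) (hx : x ∈ X.verts) : PointedIso Y y X x := by
  haveI : Nonempty V := ⟨x⟩
  obtain ⟨φ, hinj, himg, hedge, hmk, hφx⟩ := h
  set ψ := Function.invFunOn φ ↑X.verts with hψdef
  have hψφ : ∀ v ∈ X.verts, ψ (φ v) = v := fun v hv =>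
    hinj.leftInvOn_invFunOn (Finset.mem_coe.mpr hv)
  have hmemY : ∀ w ∈ Y.verts, ∃ v ∈ (↑X.verts : Set V), φ v = w := by
    intro w hw
    rw [← himg] at hw
    obtain ⟨v, hv, rfl⟩ := Finset.mem_image.mp hw
    exact ⟨v, Finset.mem_coe.mpr hv, rfl⟩
  have hφψ : ∀ w ∈ Y.verts, φ (ψ w) = w := fun w hw => Function.invFunOn_eq (hmemY w hw)
  have hψmem : ∀ w ∈ Y.verts, ψ w ∈ X.verts := fun w hw =>
    Finset.mem_coe.mp (Function.invFunOn_mem (hmemY w hw))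
  refine ⟨ψ, ?_, ?_, ?_, ?_, ?_⟩
  · intro w1 hw1 w2 hw2 hww
    have := congrArg φ hww
    rwa [hφψ _ (Finset.mem_coe.mp hw1), hφψ _ (Finset.mem_coe.mp hw2)] at this
  · apply Finset.Subset.antisymm
    · intro v hv
      obtain ⟨w, hw, rfl⟩ := Finset.mem_image.mp hv
      exact hψmem w hw
    · intro v hv
      refine Finset.mem_image.mpr ⟨φ v, ?_, hψφ v hv⟩
      rw [← himg]; exact Finset.mem_image_of_mem φ hv
  · intro t ht
    have h1 : t.image ψ ⊆ X.verts := by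
      intro u hu
      obtain ⟨w, hw, rfl⟩ := Finset.mem_image.mp hu
      exact hψmem w (ht hw)
    have h2 : (t.image ψ).image φ = t := by
      apply Finset.ext
      intro w
      simp only [Finset.mem_image]
      constructor
      · rintro ⟨u, ⟨v, hv, rfl⟩, rfl⟩; rwa [hφψ v (ht hv)]
      · intro hw; exact ⟨ψ w, ⟨w, hw, rfl⟩, hφψ w (ht hw)⟩
    have := hedge (t.image ψ) h1
    rw [h2] at this
    exact this.symm
  · intro w hw
    have := hmk (ψ w) (hψmem w hw)
    rw [hφψ w hw] at this
    exact this.symm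
  · rw [← hφx]; exact hψφ x hx

lemma IsPathLen.map {X Y : MarkedHypergraph V} {φ : V → V}
    (hinj : Set.InjOn φ ↑X.verts) (himg : X.verts.image φ = Y.verts)
    (hedge : ∀ e : Finset V, e ⊆ X.verts → (e ∈ X.edges ↔ e.image φ ∈ Y.edges))
    (hYE : ∀ f ∈ Y.edges, f ⊆ Y.verts)
    {a b : V} {L : ℕ} (h : IsPathLen X a b L) : IsPathLen Y (φ a) (φ b) L := by
  haveI : Nonempty V := ⟨a⟩
  set ψ := Function.invFunOn φ ↑X.verts with hψdef
  have hψφ : ∀ v ∈ X.verts, ψ (φ v) = v := fun v hv =>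
    hinj.leftInvOn_invFunOn (Finset.mem_coe.mpr hv)
  have hψmem : ∀ w ∈ Y.verts, ψ w ∈ X.verts := by
    intro w hw
    rw [← himg] at hw
    obtain ⟨v, hv, rfl⟩ := Finset.mem_image.mp hw
    rw [hψφ v hv]; exact hv
  have hback : ∀ s : Finset V, s ⊆ X.verts → (s.image φ).image ψ = s := by
    intro s hs
    apply Finset.ext
    intro w
    simp only [Finset.mem_image]
    constructor
    · rintro ⟨u, ⟨v, hv, rfl⟩, rfl⟩; rwa [hψφ v (hs hv)]
    · intro hw; exact ⟨φ w, ⟨w, hw, rfl⟩, hψφ w (hs hw)⟩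
  have hpre : ∀ f ∈ Y.edges, ∃ g ∈ X.edges, g ⊆ X.verts ∧ g.image φ = f := by
    intro f hf
    have hfv := hYE f hf
    have hg1 : f.image ψ ⊆ X.verts := by
      intro u hu
      obtain ⟨w, hw, rfl⟩ := Finset.mem_image.mp hu
      exact hψmem w (hfv hw)
    have hg2 : (f.image ψ).image φ = f := by
      apply Finset.ext
      intro w
      simp only [Finset.mem_image]
      constructor
      · rintro ⟨u, ⟨v, hv, rfl⟩, rfl⟩
        have hv' : v ∈ Y.verts := hfv hv
        rw [← himg] at hv'
        obtain ⟨u', hu', rfl⟩ := Finset.mem_image.mp hv'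
        rwa [hψφ u' hu']
      · intro hw
        refine ⟨ψ w, ⟨w, hw, rfl⟩, ?_⟩
        have hw' : w ∈ Y.verts := hfv hw
        rw [← himg] at hw'
        obtain ⟨u', hu', rfl⟩ := Finset.mem_image.mp hw'
        rw [hψφ u' hu']
    exact ⟨f.image ψ, (hedge (f.image ψ) hg1).mpr (by rwa [hg2]), hg1, hg2⟩
  rcases h with ⟨h0, rfl, hV, hE⟩ | ⟨hL, hab, e, hE, hV, h3, hd, ha, hb, hcons, hfar, hano, hbno⟩
  · refine Or.inl ⟨h0, rfl, ?_, ?_⟩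
    · rw [← himg, hV, Finset.image_singleton]
    · rw [Finset.eq_empty_iff_forall_notMem]
      intro f hf
      obtain ⟨g, hg, -, -⟩ := hpre f hf
      rw [hE] at hg
      exact absurd hg (Finset.notMem_empty g)
  · have hsub : ∀ i, i < L → e i ⊆ X.verts := by
      intro i hi v hv
      rw [hV]; exact Finset.mem_biUnion.mpr ⟨i, Finset.mem_range.mpr hi, hv⟩
    have hav : a ∈ X.verts := hsub 0 hL ha
    have hbv : b ∈ X.verts := hsub (L - 1) (by omega) hb
    have hinter : ∀ i j, i < L → j < L →
        (e i).image φ ∩ (e j).image φ = (e i ∩ e j).image φ := by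
      intro i j hi hj
      exact (Finset.image_inter_of_injOn _ _ (hinj.mono (by
        rw [← Finset.coe_union]
        exact Finset.coe_subset.mpr (Finset.union_subset (hsub i hi) (hsub j hj))))).symm
    refine Or.inr ⟨hL, fun hc => hab (hinj (Finset.mem_coe.mpr hav) (Finset.mem_coe.mpr hbv) hc),
      fun i => (e i).image φ, ?_, ?_, ?_, ?_, Finset.mem_image_of_mem φ ha,
      Finset.mem_image_of_mem φ hb, ?_, ?_, ?_, ?_⟩
    · apply Finset.ext
      intro f
      simp only [Finset.mem_image, Finset.mem_range]
      constructor
      · intro hf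
        obtain ⟨g, hg, hgsub, rfl⟩ := hpre f hf
        rw [hE] at hg
        obtain ⟨i, hi, rfl⟩ := Finset.mem_image.mp hg
        exact ⟨i, Finset.mem_range.mp hi, rfl⟩
      · rintro ⟨i, hi, rfl⟩
        exact (hedge (e i) (hsub i hi)).mp (by rw [hE]; exact Finset.mem_image_of_mem e (Finset.mem_range.mpr hi))
    · rw [← himg, hV, Finset.biUnion_image]
    · intro i hi
      rw [Finset.card_image_of_injOn (hinj.mono (Finset.coe_subset.mpr (hsub i hi)))]
      exact h3 i hi
    · intro i j hi hj hij hc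
      apply hd i j hi hj hij
      have := congrArg (Finset.image ψ) hc
      rwa [hback (e i) (hsub i hi), hback (e j) (hsub j hj)] at this
    · intro i hi
      rw [hinter i (i + 1) (by omega) hi,
        Finset.card_image_of_injOn (hinj.mono (Finset.coe_subset.mpr
          (le_trans Finset.inter_subset_left (hsub i (by omega)))))]
      exact hcons i hi
    · intro i j hij hj
      rw [hinter i j (by omega) hj, hfar i j hij hj, Finset.image_empty]
    · intro i h1 hi hc
      obtain ⟨v, hv, hφv⟩ := Finset.mem_image.mp hc
      have : v = a := hinj (Finset.mem_coe.mpr (hsub i hi hv)) (Finset.mem_coe.mpr hav) hφv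
      exact hano i h1 hi (this ▸ hv)
    · intro i hi hc
      obtain ⟨v, hv, hφv⟩ := Finset.mem_image.mp hc
      have : v = b := hinj (Finset.mem_coe.mpr (hsub i (by omega) hv)) (Finset.mem_coe.mpr hbv) hφv
      exact hbno i hi (this ▸ hv)

lemma IsCycleLen.map {X Y : MarkedHypergraph V} {φ : V → V}
    (hinj : Set.InjOn φ ↑X.verts) (himg : X.verts.image φ = Y.verts)
    (hedge : ∀ e : Finset V, e ⊆ X.verts → (e ∈ X.edges ↔ e.image φ ∈ Y.edges))
    (hYE : ∀ f ∈ Y.edges, f ⊆ Y.verts)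
    {a : V} {L : ℕ} (h : IsCycleLen X a L) : IsCycleLen Y (φ a) L := by
  haveI : Nonempty V := ⟨a⟩
  set ψ := Function.invFunOn φ ↑X.verts with hψdef
  have hψφ : ∀ v ∈ X.verts, ψ (φ v) = v := fun v hv =>
    hinj.leftInvOn_invFunOn (Finset.mem_coe.mpr hv)
  have hψmem : ∀ w ∈ Y.verts, ψ w ∈ X.verts := by
    intro w hw
    rw [← himg] at hw
    obtain ⟨v, hv, rfl⟩ := Finset.mem_image.mp hw
    rw [hψφ v hv]; exact hv
  have hback : ∀ s : Finset V, s ⊆ X.verts → (s.image φ).image ψ = s := by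
    intro s hs
    apply Finset.ext
    intro w
    simp only [Finset.mem_image]
    constructor
    · rintro ⟨u, ⟨v, hv, rfl⟩, rfl⟩; rwa [hψφ v (hs hv)]
    · intro hw; exact ⟨φ w, ⟨w, hw, rfl⟩, hψφ w (hs hw)⟩
  have hpre : ∀ f ∈ Y.edges, ∃ g ∈ X.edges, g ⊆ X.verts ∧ g.image φ = f := by
    intro f hf
    have hfv := hYE f hf
    have hg1 : f.image ψ ⊆ X.verts := by
      intro u hu
      obtain ⟨w, hw, rfl⟩ := Finset.mem_image.mp hu
      exact hψmem w (hfv hw)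
    have hg2 : (f.image ψ).image φ = f := by
      apply Finset.ext
      intro w
      simp only [Finset.mem_image]
      constructor
      · rintro ⟨u, ⟨v, hv, rfl⟩, rfl⟩
        have hv' : v ∈ Y.verts := hfv hv
        rw [← himg] at hv'
        obtain ⟨u', hu', rfl⟩ := Finset.mem_image.mp hv'
        rwa [hψφ u' hu']
      · intro hw
        refine ⟨ψ w, ⟨w, hw, rfl⟩, ?_⟩
        have hw' : w ∈ Y.verts := hfv hw
        rw [← himg] at hw'
        obtain ⟨u', hu', rfl⟩ := Finset.mem_image.mp hw'
        rw [hψφ u' hu']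
    exact ⟨f.image ψ, (hedge (f.image ψ) hg1).mpr (by rwa [hg2]), hg1, hg2⟩
  obtain ⟨hL, e, hE, hV, h3, hd, ha0, haL, hano, h2c, h3c, hfar⟩ := h
  have hsub : ∀ i, i < L → e i ⊆ X.verts := by
    intro i hi v hv
    rw [hV]; exact Finset.mem_biUnion.mpr ⟨i, Finset.mem_range.mpr hi, hv⟩
  have hav : a ∈ X.verts := hsub 0 (by omega) ha0
  have hinter : ∀ i j, i < L → j < L →
      (e i).image φ ∩ (e j).image φ = (e i ∩ e j).image φ := by
    intro i j hi hj
    exact (Finset.image_inter_of_injOn _ _ (hinj.mono (by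
      rw [← Finset.coe_union]
      exact Finset.coe_subset.mpr (Finset.union_subset (hsub i hi) (hsub j hj))))).symm
  refine ⟨hL, fun i => (e i).image φ, ?_, ?_, ?_, ?_, Finset.mem_image_of_mem φ ha0,
    Finset.mem_image_of_mem φ haL, ?_, ?_, ?_, ?_⟩
  · apply Finset.ext
    intro f
    simp only [Finset.mem_image, Finset.mem_range]
    constructor
    · intro hf
      obtain ⟨g, hg, hgsub, rfl⟩ := hpre f hf
      rw [hE] at hg
      obtain ⟨i, hi, rfl⟩ := Finset.mem_image.mp hg
      exact ⟨i, Finset.mem_range.mp hi, rfl⟩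
    · rintro ⟨i, hi, rfl⟩
      exact (hedge (e i) (hsub i hi)).mp (by rw [hE]; exact Finset.mem_image_of_mem e (Finset.mem_range.mpr hi))
  · rw [← himg, hV, Finset.biUnion_image]
  · intro i hi
    rw [Finset.card_image_of_injOn (hinj.mono (Finset.coe_subset.mpr (hsub i hi)))]
    exact h3 i hi
  · intro i j hi hj hij hc
    apply hd i j hi hj hij
    have := congrArg (Finset.image ψ) hc
    rwa [hback (e i) (hsub i hi), hback (e j) (hsub j hj)] at this
  · intro i h1 hi hc
    obtain ⟨v, hv, hφv⟩ := Finset.mem_image.mp hc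
    have : v = a := hinj (Finset.mem_coe.mpr (hsub i (by omega) hv)) (Finset.mem_coe.mpr hav) hφv
    exact hano i h1 hi (this ▸ hv)
  · intro hL2
    rw [hinter 0 1 (by omega) (by omega),
      Finset.card_image_of_injOn (hinj.mono (Finset.coe_subset.mpr
        (le_trans Finset.inter_subset_left (hsub 0 (by omega)))))]
    exact h2c hL2
  · intro hL3
    obtain ⟨hsing, hcons⟩ := h3c hL3
    constructor
    · rw [hinter 0 (L - 1) (by omega) (by omega), hsing, Finset.image_singleton]
    · intro i hi
      rw [hinter i (i + 1) (by omega) hi,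
        Finset.card_image_of_injOn (hinj.mono (Finset.coe_subset.mpr
          (le_trans Finset.inter_subset_left (hsub i (by omega)))))]
      exact hcons i hi
  · intro i j hij hj h2 hle
    rw [hinter i j (by omega) hj, hfar i j hij hj h2 hle, Finset.image_empty]

/-! ### Concrete description of `xFam famD0` -/

def Conc (H X : MarkedHypergraph V) (x : V) : Prop :=
  X.IsValid ∧ X.IsSub H ∧ x ∈ X.verts ∧
    ((∃ m L, 1 ≤ L ∧ IsPathLen X x m L ∧ X.marked = {m}) ∨
     ((∃ L, IsCycleLen X x L) ∧ X.marked = ∅))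

lemma xFam_iff {H X : MarkedHypergraph V} {x : V} :
    X ∈ xFam famD0 H x ↔ Conc H X x := by
  constructor
  · rintro ⟨hval, hsub, hx, ⟨S, s⟩, hSfam, hiso⟩
    refine ⟨hval, hsub, hx, ?_⟩
    obtain ⟨ψ, hinj, himg, hedge, hmk, hψs⟩ := PointedIso.symm' hiso hx
    have hYE : ∀ f ∈ X.edges, f ⊆ X.verts := fun f hf => (hval.2.1 f hf).1
    rcases hSfam with ⟨⟨m, L, hL, hpath, hm⟩, hcard⟩ | ⟨⟨L, hcyc⟩, hmk0⟩
    · left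
      obtain ⟨u, hu⟩ := Finset.card_eq_one.mp hcard
      have hmS : S.marked = {m} := by
        rw [hu] at hm ⊢
        rw [Finset.mem_singleton] at hm
        rw [hm]
      have hmv : m ∈ S.verts := (path_endpoints hpath).2
      have hsv : s ∈ S.verts := (path_endpoints hpath).1
      have hpath' := IsPathLen.map hinj himg hedge hYE hpath
      rw [hψs] at hpath'
      refine ⟨ψ m, L, hL, hpath', ?_⟩
      apply Finset.Subset.antisymm
      · intro v hv
        have hvv : v ∈ X.verts := by
          rw [hsub.2.2] at hv
          exact (Finset.mem_inter.mp hv).1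
        rw [← himg] at hvv
        obtain ⟨w, hw, rfl⟩ := Finset.mem_image.mp hvv
        have hwm := (hmk w hw).mpr hv
        rw [hmS, Finset.mem_singleton] at hwm
        rw [hwm]
        exact Finset.mem_singleton_self _
      · intro v hv
        rw [Finset.mem_singleton] at hv
        rw [hv]
        exact (hmk m hmv).mp hm
    · right
      have hcyc' := IsCycleLen.map hinj himg hedge hYE hcyc
      rw [hψs] at hcyc'
      refine ⟨⟨L, hcyc'⟩, ?_⟩
      rw [Finset.eq_empty_iff_forall_notMem]
      intro v hv
      have hvv : v ∈ X.verts := by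
        rw [hsub.2.2] at hv
        exact (Finset.mem_inter.mp hv).1
      rw [← himg] at hvv
      obtain ⟨w, hw, rfl⟩ := Finset.mem_image.mp hvv
      have hwm := (hmk w hw).mpr hv
      rw [hmk0] at hwm
      exact absurd hwm (Finset.notMem_empty w)
  · rintro ⟨hval, hsub, hx, hstr⟩
    refine ⟨hval, hsub, hx, (X, x), ?_,
      ⟨id, Set.injOn_id _, Finset.image_id, fun e _ => by rw [Finset.image_id],
        fun v _ => Iff.rfl, rfl⟩⟩
    rcases hstr with ⟨m, L, hL, hp, hm⟩ | ⟨hc, hm⟩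
    · exact Or.inl ⟨⟨m, L, hL, hp, hm ▸ Finset.mem_singleton_self m⟩,
        by rw [hm]; exact Finset.card_singleton m⟩
    · exact Or.inr ⟨hc, hm⟩

/-! ### Single edges and splitting of paths/cycles -/

lemma pathlen_single {P : MarkedHypergraph V} {e0 : Finset V} {a c : V}
    (hP : P.verts = e0) (hE : P.edges = {e0}) (h3 : e0.card = 3)
    (ha : a ∈ e0) (hc : c ∈ e0) (hac : a ≠ c) : IsPathLen P a c 1 := by
  refine Or.inr ⟨le_refl 1, hac, fun _ => e0, ?_, ?_, fun i _ => h3, ?_, ha, hc, ?_, ?_, ?_, ?_⟩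
  · rw [hE, Finset.range_one, Finset.image_singleton]
  · rw [hP, Finset.range_one, Finset.singleton_biUnion]
  · intro i j hi hj hij; exfalso; omega
  · intro i hi; exact absurd hi (by omega)
  · intro i j h2 hj; exact absurd hj (by omega)
  · intro i h1 hi; exact absurd hi (by omega)
  · intro i hi; exact absurd hi (by omega)

lemma split_path {X : MarkedHypergraph V} {a b : V} {L : ℕ}
    (h : IsPathLen X a b L) (hL : 2 ≤ L) :
    ∃ (c : V) (V₁ V₂ : Finset V) (E₁ E₂ : Finset (Finset V)),
      c ≠ a ∧ c ≠ b ∧ c ∈ X.verts ∧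
      (∀ m, IsPathLen (⟨V₁, E₁, m⟩ : MarkedHypergraph V) c a 1) ∧
      (∀ m, IsPathLen (⟨V₂, E₂, m⟩ : MarkedHypergraph V) c b (L - 1)) ∧
      E₁ ⊆ X.edges ∧ E₂ ⊆ X.edges ∧ V₁ ⊆ X.verts ∧ V₂ ⊆ X.verts ∧
      (∀ f ∈ E₁, f ⊆ V₁ ∧ f.card = 3) ∧ (∀ f ∈ E₂, f ⊆ V₂ ∧ f.card = 3) ∧
      a ∈ V₁ ∧ b ∈ V₂ ∧ c ∈ V₁ ∧ c ∈ V₂ ∧ a ∉ V₂ ∧ b ∉ V₁ ∧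
      (∀ v, v ∈ V₁ → v ∈ V₂ → v = c) := by
  rcases h with ⟨h0, -, -, -⟩ | ⟨-, hab, e, hE, hV, h3, hd, ha, hb, hcons, hfar, hano, hbno⟩
  · omega
  have hsub : ∀ i, i < L → e i ⊆ X.verts := by
    intro i hi v hv
    rw [hV]; exact Finset.mem_biUnion.mpr ⟨i, Finset.mem_range.mpr hi, hv⟩
  obtain ⟨c, hc⟩ := Finset.card_eq_one.mp (hcons 0 (by omega))
  have hc0 : c ∈ e 0 := (Finset.mem_inter.mp (hc ▸ Finset.mem_singleton_self c)).1
  have hc1 : c ∈ e 1 := (Finset.mem_inter.mp (hc ▸ Finset.mem_singleton_self c)).2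
  have hca : c ≠ a := fun hh => hano 1 (le_refl 1) (by omega) (hh ▸ hc1)
  have hcb : c ≠ b := fun hh => hbno 0 (by omega) (hh ▸ hc0)
  refine ⟨c, e 0, (Finset.range (L - 1)).biUnion (fun i => e (i + 1)),
    {e 0}, (Finset.range (L - 1)).image (fun i => e (i + 1)),
    hca, hcb, hsub 0 (by omega) hc0, ?_, ?_, ?_, ?_, hsub 0 (by omega), ?_, ?_, ?_,
    ha, ?_, hc0, ?_, ?_, ?_, ?_⟩
  · intro m
    exact pathlen_single rfl rfl (h3 0 (by omega)) hc0 ha hca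
  · intro m
    refine Or.inr ⟨by omega, hcb, fun i => e (i + 1), rfl, rfl,
      fun i hi => h3 (i + 1) (by omega),
      fun i j hi hj hij => hd (i + 1) (j + 1) (by omega) (by omega) (by omega),
      hc1, ?_, fun i hi => hcons (i + 1) (by omega),
      fun i j hij hj => hfar (i + 1) (j + 1) (by omega) (by omega), ?_, ?_⟩
    · show b ∈ e (L - 1 - 1 + 1)
      rw [show L - 1 - 1 + 1 = L - 1 by omega]; exact hb
    · intro i h1 hi hcmem
      have := hfar 0 (i + 1) (by omega) (by omega)
      exact absurd (Finset.mem_inter.mpr ⟨hc0, hcmem⟩) (by rw [this]; exact Finset.notMem_empty c)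
    · intro i hi
      exact hbno (i + 1) (by omega)
  · intro f hf
    rw [Finset.mem_singleton] at hf
    rw [hf, hE]
    exact Finset.mem_image_of_mem e (Finset.mem_range.mpr (by omega))
  · intro f hf
    obtain ⟨i, hi, rfl⟩ := Finset.mem_image.mp hf
    rw [Finset.mem_range] at hi
    rw [hE]
    exact Finset.mem_image_of_mem e (Finset.mem_range.mpr (by omega))
  · intro v hv
    obtain ⟨i, hi, hvi⟩ := Finset.mem_biUnion.mp hv
    rw [Finset.mem_range] at hi
    exact hsub (i + 1) (by omega) hvi
  · intro f hf
    rw [Finset.mem_singleton] at hf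
    exact ⟨by rw [hf], by rw [hf]; exact h3 0 (by omega)⟩
  · intro f hf
    obtain ⟨i, hi, rfl⟩ := Finset.mem_image.mp hf
    rw [Finset.mem_range] at hi
    refine ⟨fun v hv => Finset.mem_biUnion.mpr ⟨i, Finset.mem_range.mpr hi, hv⟩,
      h3 (i + 1) (by omega)⟩
  · refine Finset.mem_biUnion.mpr ⟨L - 2, Finset.mem_range.mpr (by omega), ?_⟩
    rw [show L - 2 + 1 = L - 1 by omega]; exact hb
  · exact Finset.mem_biUnion.mpr ⟨0, Finset.mem_range.mpr (by omega), hc1⟩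
  · intro hmem
    obtain ⟨i, hi, hvi⟩ := Finset.mem_biUnion.mp hmem
    rw [Finset.mem_range] at hi
    exact hano (i + 1) (by omega) (by omega) hvi
  · exact hbno 0 (by omega)
  · intro v hv1 hv2
    obtain ⟨i, hi, hvi⟩ := Finset.mem_biUnion.mp hv2
    rw [Finset.mem_range] at hi
    rcases Nat.eq_zero_or_pos i with rfl | hpos
    · have : v ∈ e 0 ∩ e 1 := Finset.mem_inter.mpr ⟨hv1, hvi⟩
      rw [hc, Finset.mem_singleton] at this
      exact this
    · have := hfar 0 (i + 1) (by omega) (by omega)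
      exact absurd (Finset.mem_inter.mpr ⟨hv1, hvi⟩)
        (by rw [this]; exact Finset.notMem_empty v)

lemma split_cycle {X : MarkedHypergraph V} {a : V} {L : ℕ}
    (h : IsCycleLen X a L) :
    ∃ (c : V) (V₁ V₂ : Finset V) (E₁ E₂ : Finset (Finset V)),
      c ≠ a ∧ c ∈ X.verts ∧
      (∀ m, IsPathLen (⟨V₁, E₁, m⟩ : MarkedHypergraph V) c a 1) ∧
      (∀ m, IsPathLen (⟨V₂, E₂, m⟩ : MarkedHypergraph V) c a (L - 1)) ∧
      E₁ ⊆ X.edges ∧ E₂ ⊆ X.edges ∧ V₁ ⊆ X.verts ∧ V₂ ⊆ X.verts ∧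
      (∀ f ∈ E₁, f ⊆ V₁ ∧ f.card = 3) ∧ (∀ f ∈ E₂, f ⊆ V₂ ∧ f.card = 3) ∧
      a ∈ V₁ ∧ a ∈ V₂ ∧ c ∈ V₁ ∧ c ∈ V₂ ∧
      (∀ v, v ∈ V₁ → v ∈ V₂ → v = c ∨ v = a) := by
  obtain ⟨hL, e, hE, hV, h3, hd, ha0, haL, hano, h2c, h3c, hfar⟩ := h
  have hsub : ∀ i, i < L → e i ⊆ X.verts := by
    intro i hi v hv
    rw [hV]; exact Finset.mem_biUnion.mpr ⟨i, Finset.mem_range.mpr hi, hv⟩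
  have hint01 : ∀ v, v ∈ e 0 ∩ e 1 → v = a ∨ v ∈ (e 0 ∩ e 1).erase a := by
    intro v hv
    by_cases hva : v = a
    · exact Or.inl hva
    · exact Or.inr (Finset.mem_erase.mpr ⟨hva, hv⟩)
  have hcex : ((e 0 ∩ e 1).erase a).Nonempty := by
    rw [← Finset.card_pos]
    rcases eq_or_lt_of_le hL with h2 | h3L
    · have hcard2 := h2c h2.symm
      have := Finset.pred_card_le_card_erase (a := a) (s := e 0 ∩ e 1)
      omega
    · have hc1 : (e 0 ∩ e 1).card = 1 := by
        have := (h3c (by omega)).2 0 (by omega)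
        simpa using this
      have hna : a ∉ e 0 ∩ e 1 := by
        intro hmem
        exact hano 1 (by omega) (by omega) (Finset.mem_inter.mp hmem).2
      rw [Finset.erase_eq_of_notMem hna]
      omega
  obtain ⟨c, hcmem⟩ := hcex
  have hca : c ≠ a := (Finset.mem_erase.mp hcmem).1
  have hc0 : c ∈ e 0 := (Finset.mem_inter.mp (Finset.mem_erase.mp hcmem).2).1
  have hc1 : c ∈ e 1 := (Finset.mem_inter.mp (Finset.mem_erase.mp hcmem).2).2
  have hkey : ∀ v, v ∈ e 0 ∩ e 1 → v = c ∨ v = a := by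
    intro v hv
    rcases eq_or_lt_of_le hL with h2 | h3L
    · have hcard2 := h2c h2.symm
      have hsubp : ({a, c} : Finset V) ⊆ e 0 ∩ e 1 := by
        intro w hw
        rcases Finset.mem_insert.mp hw with rfl | hw
        · rw [h2.symm] at haL
          exact Finset.mem_inter.mpr ⟨ha0, haL⟩
        · rw [Finset.mem_singleton] at hw
          rw [hw]
          exact Finset.mem_inter.mpr ⟨hc0, hc1⟩
      have heq : e 0 ∩ e 1 = {a, c} :=
        (Finset.eq_of_subset_of_card_le hsubp
          (by rw [hcard2, Finset.card_pair (Ne.symm hca)])).symm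
      rw [heq] at hv
      rcases Finset.mem_insert.mp hv with rfl | hv
      · exact Or.inr rfl
      · rw [Finset.mem_singleton] at hv
        exact Or.inl hv
    · have hc1' := (h3c (by omega)).2 0 (by omega)
      have hsubp : ({c} : Finset V) ⊆ e 0 ∩ e 1 := by
        intro w hw
        rw [Finset.mem_singleton] at hw
        rw [hw]
        exact Finset.mem_inter.mpr ⟨hc0, hc1⟩
      have heq : e 0 ∩ e 1 = {c} :=
        (Finset.eq_of_subset_of_card_le hsubp (by rw [hc1', Finset.card_singleton])).symm
      rw [heq, Finset.mem_singleton] at hv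
      exact Or.inl hv
  refine ⟨c, e 0, (Finset.range (L - 1)).biUnion (fun i => e (i + 1)),
    {e 0}, (Finset.range (L - 1)).image (fun i => e (i + 1)),
    hca, hsub 0 (by omega) hc0, ?_, ?_, ?_, ?_, hsub 0 (by omega), ?_, ?_, ?_,
    ha0, ?_, hc0, ?_, ?_⟩
  · intro m
    exact pathlen_single rfl rfl (h3 0 (by omega)) hc0 ha0 hca
  · intro m
    refine Or.inr ⟨by omega, hca, fun i => e (i + 1), rfl, rfl,
      fun i hi => h3 (i + 1) (by omega),
      fun i j hi hj hij => hd (i + 1) (j + 1) (by omega) (by omega) (by omega),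
      hc1, ?_, ?_, ?_, ?_, ?_⟩
    · show a ∈ e (L - 1 - 1 + 1)
      rw [show L - 1 - 1 + 1 = L - 1 by omega]; exact haL
    · intro i hi
      exact (h3c (by omega)).2 (i + 1) (by omega)
    · intro i j hij hj
      exact hfar (i + 1) (j + 1) (by omega) (by omega) (by omega) (by omega)
    · intro i h1 hi hcmem2
      rcases Nat.lt_or_ge (i + 1) (L - 1) with hlt | hge
      · have := hfar 0 (i + 1) (by omega) (by omega) (by omega) (by omega)
        exact absurd (Finset.mem_inter.mpr ⟨hc0, hcmem2⟩)
          (by rw [this]; exact Finset.notMem_empty c)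
      · have hieq : i + 1 = L - 1 := by omega
        have hL3 : 3 ≤ L := by omega
        have := (h3c hL3).1
        have hcc : c ∈ e 0 ∩ e (L - 1) := Finset.mem_inter.mpr ⟨hc0, hieq ▸ hcmem2⟩
        rw [this, Finset.mem_singleton] at hcc
        exact hca hcc
    · intro i hi
      exact hano (i + 1) (by omega) (by omega)
  · intro f hf
    rw [Finset.mem_singleton] at hf
    rw [hf, hE]
    exact Finset.mem_image_of_mem e (Finset.mem_range.mpr (by omega))
  · intro f hf
    obtain ⟨i, hi, rfl⟩ := Finset.mem_image.mp hf
    rw [Finset.mem_range] at hi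
    rw [hE]
    exact Finset.mem_image_of_mem e (Finset.mem_range.mpr (by omega))
  · intro v hv
    obtain ⟨i, hi, hvi⟩ := Finset.mem_biUnion.mp hv
    rw [Finset.mem_range] at hi
    exact hsub (i + 1) (by omega) hvi
  · intro f hf
    rw [Finset.mem_singleton] at hf
    exact ⟨by rw [hf], by rw [hf]; exact h3 0 (by omega)⟩
  · intro f hf
    obtain ⟨i, hi, rfl⟩ := Finset.mem_image.mp hf
    rw [Finset.mem_range] at hi
    refine ⟨fun v hv => Finset.mem_biUnion.mpr ⟨i, Finset.mem_range.mpr hi, hv⟩,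
      h3 (i + 1) (by omega)⟩
  · refine Finset.mem_biUnion.mpr ⟨L - 2, Finset.mem_range.mpr (by omega), ?_⟩
    rw [show L - 2 + 1 = L - 1 by omega]; exact haL
  · exact Finset.mem_biUnion.mpr ⟨0, Finset.mem_range.mpr (by omega), hc1⟩
  · intro v hv1 hv2
    obtain ⟨i, hi, hvi⟩ := Finset.mem_biUnion.mp hv2
    rw [Finset.mem_range] at hi
    rcases Nat.eq_zero_or_pos i with rfl | hpos
    · exact hkey v (Finset.mem_inter.mpr ⟨hv1, hvi⟩)
    · rcases Nat.lt_or_ge (i + 1) (L - 1) with hlt | hge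
      · have := hfar 0 (i + 1) (by omega) (by omega) (by omega) (by omega)
        exact absurd (Finset.mem_inter.mpr ⟨hv1, hvi⟩)
          (by rw [this]; exact Finset.notMem_empty v)
      · have hieq : i + 1 = L - 1 := by omega
        have hL3 : 3 ≤ L := by omega
        have := (h3c hL3).1
        have hcc : v ∈ e 0 ∩ e (L - 1) := Finset.mem_inter.mpr ⟨hv1, hieq ▸ hvi⟩
        rw [this, Finset.mem_singleton] at hcc
        exact Or.inr hcc

/-! ### Dangers, patterns and the game -/

def HasPat (H : MarkedHypergraph V) : Prop :=
  (∃ N, N.IsSub H ∧ IsNunchaku N) ∨ (∃ C a, C.IsSub H ∧ IsNecklace C a)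

lemma not_triv_of_inter {H : MarkedHypergraph V} (hval : H.IsValid) (hunif : H.IsUniform 3)
    (hnt : ¬ H.TrivialMakerWin) {x y : V} (hx : x ∈ H.verts \ H.marked)
    (hy : y ∈ inter (H.plus x) (xFam famD0 H x)) :
    ¬ ((H.plus x).minus y).TrivialMakerWin := by
  rintro ⟨e, he, hc⟩
  have he' : e ∈ H.edges.filter fun f => y ∉ f := he
  rw [Finset.mem_filter] at he'
  obtain ⟨heH, hye⟩ := he'
  have h2 := not_triv_iff.mp hnt e heH
  have hc' : (e \ (insert x H.marked).erase y).card ≤ 1 := hc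
  have hed : e \ (insert x H.marked).erase y = (e \ H.marked).erase x := by
    ext v
    simp only [Finset.mem_sdiff, Finset.mem_erase, Finset.mem_insert]
    constructor
    · rintro ⟨hv, hno⟩
      have hvy : v ≠ y := fun hh => hye (hh ▸ hv)
      exact ⟨fun hh => hno ⟨hvy, Or.inl hh⟩, hv, fun hh => hno ⟨hvy, Or.inr hh⟩⟩
    · rintro ⟨hvx, hv, hvm⟩
      exact ⟨hv, fun hh => hh.2.elim hvx hvm⟩
  rw [hed] at hc'
  have hxe : x ∈ e \ H.marked := by
    by_contra hxe
    rw [Finset.erase_eq_of_notMem hxe] at hc'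
    omega
  have hcard2 : (e \ H.marked).card = 2 := by
    have := Finset.card_erase_of_mem hxe
    omega
  have h3 : e.card = 3 := hunif e heH
  have hcap : (e ∩ H.marked).card = 1 := by
    have := Finset.card_sdiff_add_card_inter e H.marked
    omega
  obtain ⟨m, hm⟩ := Finset.card_eq_one.mp hcap
  have hxM : x ∉ H.marked := (Finset.mem_sdiff.mp hx).2
  have hmm : m ∈ e := (Finset.mem_inter.mp (hm ▸ Finset.mem_singleton_self m)).1
  have hmM : m ∈ H.marked := (Finset.mem_inter.mp (hm ▸ Finset.mem_singleton_self m)).2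
  have hxm : x ≠ m := fun hh => hxM (hh ▸ hmM)
  have hxe' : x ∈ e := (Finset.mem_sdiff.mp hxe).1
  have hSconc : Conc H ⟨e, {e}, e ∩ H.marked⟩ x := by
    refine ⟨⟨⟨x, hxe'⟩, ?_, Finset.inter_subset_left⟩,
      ⟨(hval.2.1 e heH).1, Finset.singleton_subset_iff.mpr heH, rfl⟩, hxe',
      Or.inl ⟨m, 1, le_refl 1, pathlen_single rfl rfl h3 hxe' hmm hxm, hm⟩⟩
    · intro f hf
      rw [Finset.mem_singleton] at hf
      subst hf
      exact ⟨Finset.Subset.refl f, Finset.card_pos.mp (by omega)⟩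
  exact hye (hy.2.2 _ (xFam_iff.mpr hSconc))

lemma danger_to_pattern {H : MarkedHypergraph V} {x y : V}
    (hx : x ∈ H.verts \ H.marked) {X : MarkedHypergraph V}
    (hX : Conc H X x) (hyX : y ∉ X.verts) :
    WinPattern ((H.plus x).minus y) := by
  obtain ⟨hvalX, hsubX, hxX, hstr⟩ := hX
  have hxM : x ∉ H.marked := (Finset.mem_sdiff.mp hx).2
  have hsubV : X.verts ⊆ ((H.plus x).minus y).verts := by
    intro v hv
    exact Finset.mem_erase.mpr ⟨fun hh => hyX (hh ▸ hv), hsubX.1 hv⟩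
  have hsubE : X.edges ⊆ ((H.plus x).minus y).edges := by
    intro f hf
    exact Finset.mem_filter.mpr ⟨hsubX.2.1 hf, fun hh => hyX ((hvalX.2.1 f hf).1 hh)⟩
  have hmem'' : ∀ v ∈ X.verts, v = x ∨ v ∈ H.marked → v ∈ ((H.plus x).minus y).marked := by
    intro v hv hor
    show v ∈ (insert x H.marked).erase y
    exact Finset.mem_erase.mpr ⟨fun hh => hyX (hh ▸ hv),
      hor.elim (fun hh => by rw [hh]; exact Finset.mem_insert_self x _) Finset.mem_insert_of_mem⟩
  have hmem''' : ∀ v, v ∈ ((H.plus x).minus y).marked → v = x ∨ v ∈ H.marked := by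
    intro v hv
    have hv' : v ∈ (insert x H.marked).erase y := hv
    exact Finset.mem_insert.mp (Finset.mem_erase.mp hv').2
  rcases hstr with ⟨m, L, hL, hpath, hmk⟩ | ⟨⟨L, hcyc⟩, hmk⟩
  · right; left
    have hmX : m ∈ X.verts := (path_endpoints hpath).2
    have hmM : m ∈ H.marked := by
      have : m ∈ X.marked := hmk ▸ Finset.mem_singleton_self m
      rw [hsubX.2.2] at this
      exact (Finset.mem_inter.mp this).2
    refine ⟨⟨X.verts, X.edges, X.verts ∩ ((H.plus x).minus y).marked⟩,
      ⟨hsubV, hsubE, rfl⟩, x, m, L, hL, pathlen_congr rfl rfl hpath, ?_⟩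
    apply Finset.Subset.antisymm
    · intro v hv
      obtain ⟨hvX, hvm⟩ := Finset.mem_inter.mp hv
      rcases hmem''' v hvm with rfl | hvM
      · exact Finset.mem_insert_self _ _
      · have : v ∈ X.marked := by
          rw [hsubX.2.2]; exact Finset.mem_inter.mpr ⟨hvX, hvM⟩
        rw [hmk, Finset.mem_singleton] at this
        rw [this]
        exact Finset.mem_insert_of_mem (Finset.mem_singleton_self m)
    · intro v hv
      rcases Finset.mem_insert.mp hv with rfl | hv
      · exact Finset.mem_inter.mpr ⟨hxX, hmem'' v hxX (Or.inl rfl)⟩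
      · rw [Finset.mem_singleton] at hv
        subst hv
        exact Finset.mem_inter.mpr ⟨hmX, hmem'' v hmX (Or.inr hmM)⟩
  · right; right
    refine ⟨⟨X.verts, X.edges, X.verts ∩ ((H.plus x).minus y).marked⟩, x,
      ⟨hsubV, hsubE, rfl⟩, L, cyclelen_congr rfl rfl hcyc, ?_⟩
    apply Finset.Subset.antisymm
    · intro v hv
      obtain ⟨hvX, hvm⟩ := Finset.mem_inter.mp hv
      rcases hmem''' v hvm with rfl | hvM
      · exact Finset.mem_singleton_self _
      · exfalso
        have : v ∈ X.marked := by
          rw [hsubX.2.2]; exact Finset.mem_inter.mpr ⟨hvX, hvM⟩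
        rw [hmk] at this
        exact Finset.notMem_empty v this
    · intro v hv
      rw [Finset.mem_singleton] at hv
      subst hv
      exact Finset.mem_inter.mpr ⟨hxX, hmem'' v hxX (Or.inl rfl)⟩

lemma pattern_cases {H : MarkedHypergraph V} (hnt : ¬ H.TrivialMakerWin)
    {x y : V} (hx : x ∈ H.verts \ H.marked) (hy : y ∈ (H.plus x).verts \ (H.plus x).marked)
    (hP : WinPattern ((H.plus x).minus y)) :
    (∃ X, Conc H X x ∧ y ∉ X.verts) ∨ HasPat H := by
  have hxM : x ∉ H.marked := (Finset.mem_sdiff.mp hx).2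
  obtain ⟨hyf, hyx⟩ := (free_plus_iff H x y).mp hy
  have hyM : y ∉ H.marked := (Finset.mem_sdiff.mp hyf).2
  rcases hP with ⟨e, he, hesub⟩ | ⟨N, hNsub, hNun⟩ | ⟨C, a, hCsub, hNeck⟩
  · exfalso
    have he' : e ∈ H.edges.filter fun f => y ∉ f := he
    rw [Finset.mem_filter] at he'
    have h2 := not_triv_iff.mp hnt e he'.1
    have hsub1 : e \ H.marked ⊆ {x} := by
      intro v hv
      obtain ⟨hve, hvM⟩ := Finset.mem_sdiff.mp hv
      have hh : v ∈ (insert x H.marked).erase y := hesub hve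
      rcases Finset.mem_insert.mp (Finset.mem_erase.mp hh).2 with rfl | hvm
      · exact Finset.mem_singleton_self _
      · exact absurd hvm hvM
    have := Finset.card_le_card hsub1
    rw [Finset.card_singleton] at this
    omega
  · obtain ⟨a, b, L, hL, hpath, hmk⟩ := hNun
    have hNv : N.verts ⊆ H.verts.erase y := hNsub.1
    have hyN : y ∉ N.verts := fun hh => (Finset.mem_erase.mp (hNv hh)).1 rfl
    have hNvH : N.verts ⊆ H.verts := fun v hv => (Finset.mem_erase.mp (hNv hv)).2
    have hNeH : N.edges ⊆ H.edges := fun f hf => (Finset.mem_filter.mp (hNsub.2.1 hf)).1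
    have hmkN : N.marked = N.verts ∩ ((H.plus x).minus y).marked := hNsub.2.2
    have hup : ∀ v ∈ N.verts, v = x ∨ v ∈ H.marked → v ∈ N.marked := by
      intro v hv hor
      rw [hmkN]
      refine Finset.mem_inter.mpr ⟨hv, ?_⟩
      show v ∈ (insert x H.marked).erase y
      exact Finset.mem_erase.mpr ⟨fun hh => hyN (hh ▸ hv),
        hor.elim (fun hh => by rw [hh]; exact Finset.mem_insert_self x _) Finset.mem_insert_of_mem⟩
    have hdown : ∀ v ∈ N.marked, v = x ∨ v ∈ H.marked := by
      intro v hv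
      rw [hmkN] at hv
      have : v ∈ (insert x H.marked).erase y := (Finset.mem_inter.mp hv).2
      exact Finset.mem_insert.mp (Finset.mem_erase.mp this).2
    have hpe := path_edges_sub hpath
    by_cases hxN : x ∈ N.verts
    · left
      have hxmk : x ∈ N.marked := hup x hxN (Or.inl rfl)
      rw [hmk] at hxmk
      have key : ∀ a' b', IsPathLen N a' b' L → N.marked = {a', b'} → x = a' →
          ∃ X, Conc H X x ∧ y ∉ X.verts := by
        intro a' b' hpath' hmk' hxa
        subst hxa
        have hab' : x ≠ b' := by
          rcases hpath' with ⟨h0, -, -, -⟩ | ⟨-, hab', -⟩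
          · omega
          · exact hab'
        have hbv : b' ∈ N.verts := (path_endpoints hpath').2
        have hbM : b' ∈ H.marked := by
          have hbmk : b' ∈ N.marked := hmk' ▸ Finset.mem_insert_of_mem (Finset.mem_singleton_self b')
          rcases hdown b' hbmk with rfl | h
          · exact absurd rfl hab'
          · exact h
        refine ⟨⟨N.verts, N.edges, N.verts ∩ H.marked⟩,
          ⟨⟨⟨x, hxN⟩, fun f hf => ⟨(hpe f hf).1, Finset.card_pos.mp (by have := (hpe f hf).2; omega)⟩,
            Finset.inter_subset_left⟩,
          ⟨hNvH, hNeH, rfl⟩, hxN,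
          Or.inl ⟨b', L, hL, pathlen_congr rfl rfl hpath', ?_⟩⟩, hyN⟩
        apply Finset.Subset.antisymm
        · intro v hv
          obtain ⟨hvN, hvM⟩ := Finset.mem_inter.mp hv
          have : v ∈ N.marked := hup v hvN (Or.inr hvM)
          rw [hmk'] at this
          rcases Finset.mem_insert.mp this with rfl | h
          · exact absurd hvM hxM
          · exact h
        · intro v hv
          rw [Finset.mem_singleton] at hv
          subst hv
          exact Finset.mem_inter.mpr ⟨hbv, hbM⟩
      rcases Finset.mem_insert.mp hxmk with h | h
      · exact key a b hpath hmk h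
      · rw [Finset.mem_singleton] at h
        exact key b a (pathlen_rev hpath) (by rw [hmk, Finset.pair_comm]) h
    · right
      left
      have hav : a ∈ N.verts := (path_endpoints hpath).1
      have hbv : b ∈ N.verts := (path_endpoints hpath).2
      have haM : a ∈ H.marked := by
        rcases hdown a (hmk ▸ Finset.mem_insert_self a _) with rfl | h
        · exact absurd hav hxN
        · exact h
      have hbM : b ∈ H.marked := by
        rcases hdown b (hmk ▸ Finset.mem_insert_of_mem (Finset.mem_singleton_self b)) with rfl | h
        · exact absurd hbv hxN
        · exact h
      refine ⟨⟨N.verts, N.edges, N.verts ∩ H.marked⟩, ⟨hNvH, hNeH, rfl⟩,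
        a, b, L, hL, pathlen_congr rfl rfl hpath, ?_⟩
      apply Finset.Subset.antisymm
      · intro v hv
        obtain ⟨hvN, hvM⟩ := Finset.mem_inter.mp hv
        have : v ∈ N.marked := hup v hvN (Or.inr hvM)
        rw [hmk] at this
        exact this
      · intro v hv
        rcases Finset.mem_insert.mp hv with rfl | hv
        · exact Finset.mem_inter.mpr ⟨hav, haM⟩
        · rw [Finset.mem_singleton] at hv
          subst hv
          exact Finset.mem_inter.mpr ⟨hbv, hbM⟩
  · obtain ⟨L, hcyc, hmk⟩ := hNeck
    have hNv : C.verts ⊆ H.verts.erase y := hCsub.1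
    have hyN : y ∉ C.verts := fun hh => (Finset.mem_erase.mp (hNv hh)).1 rfl
    have hNvH : C.verts ⊆ H.verts := fun v hv => (Finset.mem_erase.mp (hNv hv)).2
    have hNeH : C.edges ⊆ H.edges := fun f hf => (Finset.mem_filter.mp (hCsub.2.1 hf)).1
    have hmkN : C.marked = C.verts ∩ ((H.plus x).minus y).marked := hCsub.2.2
    have hup : ∀ v ∈ C.verts, v = x ∨ v ∈ H.marked → v ∈ C.marked := by
      intro v hv hor
      rw [hmkN]
      refine Finset.mem_inter.mpr ⟨hv, ?_⟩
      show v ∈ (insert x H.marked).erase y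
      exact Finset.mem_erase.mpr ⟨fun hh => hyN (hh ▸ hv),
        hor.elim (fun hh => by rw [hh]; exact Finset.mem_insert_self x _) Finset.mem_insert_of_mem⟩
    have hdown : ∀ v ∈ C.marked, v = x ∨ v ∈ H.marked := by
      intro v hv
      rw [hmkN] at hv
      have : v ∈ (insert x H.marked).erase y := (Finset.mem_inter.mp hv).2
      exact Finset.mem_insert.mp (Finset.mem_erase.mp this).2
    have hpe := cycle_edges_sub hcyc
    have hav : a ∈ C.verts := cycle_endpoints hcyc
    by_cases hxN : x ∈ C.verts
    · left
      have hxmk : x ∈ C.marked := hup x hxN (Or.inl rfl)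
      rw [hmk, Finset.mem_singleton] at hxmk
      subst hxmk
      refine ⟨⟨C.verts, C.edges, C.verts ∩ H.marked⟩,
        ⟨⟨⟨x, hav⟩, fun f hf => ⟨(hpe f hf).1, Finset.card_pos.mp (by have := (hpe f hf).2; omega)⟩,
          Finset.inter_subset_left⟩,
        ⟨hNvH, hNeH, rfl⟩, hav,
        Or.inr ⟨⟨L, cyclelen_congr rfl rfl hcyc⟩, ?_⟩⟩, hyN⟩
      rw [Finset.eq_empty_iff_forall_notMem]
      intro v hv
      obtain ⟨hvN, hvM⟩ := Finset.mem_inter.mp hv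
      have : v ∈ C.marked := hup v hvN (Or.inr hvM)
      rw [hmk, Finset.mem_singleton] at this
      subst this
      exact hxM hvM
    · right
      right
      have haM : a ∈ H.marked := by
        rcases hdown a (hmk ▸ Finset.mem_singleton_self a) with rfl | h
        · exact absurd hav hxN
        · exact h
      refine ⟨⟨C.verts, C.edges, C.verts ∩ H.marked⟩, a, ⟨hNvH, hNeH, rfl⟩,
        L, cyclelen_congr rfl rfl hcyc, ?_⟩
      apply Finset.Subset.antisymm
      · intro v hv
        obtain ⟨hvN, hvM⟩ := Finset.mem_inter.mp hv
        have : v ∈ C.marked := hup v hvN (Or.inr hvM)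
        rw [hmk] at this
        exact this
      · intro v hv
        rw [Finset.mem_singleton] at hv
        subst hv
        exact Finset.mem_inter.mpr ⟨hav, haM⟩

lemma caseB {H : MarkedHypergraph V} (hnt : ¬ H.TrivialMakerWin) (hpat : HasPat H) :
    ∃ x' ∈ H.verts \ H.marked, inter (H.plus x') (xFam famD0 H x') = ∅ := by
  rcases hpat with ⟨N, hsub, hNun⟩ | ⟨C, a, hsub, hNeck⟩
  · obtain ⟨a, b, L, hL, hpath, hmk⟩ := hNun
    have hmkN : N.marked = N.verts ∩ H.marked := hsub.2.2
    have hav := (path_endpoints hpath).1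
    have hbv := (path_endpoints hpath).2
    have haM : a ∈ H.marked := by
      have : a ∈ N.marked := hmk ▸ Finset.mem_insert_self a _
      rw [hmkN] at this
      exact (Finset.mem_inter.mp this).2
    have hbM : b ∈ H.marked := by
      have : b ∈ N.marked := hmk ▸ Finset.mem_insert_of_mem (Finset.mem_singleton_self b)
      rw [hmkN] at this
      exact (Finset.mem_inter.mp this).2
    have hL2 : 2 ≤ L := by
      by_contra hcon
      rcases hpath with ⟨h0, -, -, -⟩ | ⟨-, hab, e, hE, hV, h3, -, ha, hb, -⟩
      · omega
      · have hLeq : L = 1 := by omega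
        subst hLeq
        apply hnt
        have he0H : e 0 ∈ H.edges := hsub.2.1 (by rw [hE]; exact Finset.mem_image_of_mem e (Finset.mem_range.mpr (by omega)))
        refine ⟨e 0, he0H, ?_⟩
        have hb0 : b ∈ e 0 := hb
        have habsub : ({a, b} : Finset V) ⊆ e 0 := by
          intro v hv
          rcases Finset.mem_insert.mp hv with rfl | hv
          · exact ha
          · rw [Finset.mem_singleton] at hv; subst hv; exact hb0
        have hsd : e 0 \ H.marked ⊆ e 0 \ {a, b} := by
          intro v hv
          obtain ⟨hv1, hv2⟩ := Finset.mem_sdiff.mp hv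
          refine Finset.mem_sdiff.mpr ⟨hv1, fun hvv => hv2 ?_⟩
          rcases Finset.mem_insert.mp hvv with rfl | hvv
          · exact haM
          · rw [Finset.mem_singleton] at hvv; subst hvv; exact hbM
        have h1 := Finset.card_le_card hsd
        rw [Finset.card_sdiff_of_subset habsub, h3 0 (by omega), Finset.card_pair hab] at h1
        omega
    obtain ⟨c, V₁, V₂, E₁, E₂, hca, hcb, hcV, hp1, hp2, hE1, hE2, hV1, hV2, hfe1, hfe2,
      haV1, hbV2, hcV1, hcV2, haV2, hbV1, hkey⟩ := split_path hpath hL2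
    have hcM : c ∉ H.marked := by
      intro hcM
      have : c ∈ N.marked := by rw [hmkN]; exact Finset.mem_inter.mpr ⟨hcV, hcM⟩
      rw [hmk] at this
      rcases Finset.mem_insert.mp this with h | h
      · exact hca h
      · rw [Finset.mem_singleton] at h; exact hcb h
    refine ⟨c, Finset.mem_sdiff.mpr ⟨hsub.1 hcV, hcM⟩, ?_⟩
    have hX1 : Conc H ⟨V₁, E₁, V₁ ∩ H.marked⟩ c := by
      refine ⟨⟨⟨c, hcV1⟩, fun f hf => ⟨(hfe1 f hf).1,
          Finset.card_pos.mp (by have := (hfe1 f hf).2; omega)⟩, Finset.inter_subset_left⟩,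
        ⟨hV1.trans hsub.1, hE1.trans hsub.2.1, rfl⟩, hcV1,
        Or.inl ⟨a, 1, le_refl 1, hp1 _, ?_⟩⟩
      apply Finset.Subset.antisymm
      · intro v hv
        obtain ⟨hv1, hv2⟩ := Finset.mem_inter.mp hv
        have : v ∈ N.marked := by rw [hmkN]; exact Finset.mem_inter.mpr ⟨hV1 hv1, hv2⟩
        rw [hmk] at this
        rcases Finset.mem_insert.mp this with rfl | h
        · exact Finset.mem_singleton_self _
        · rw [Finset.mem_singleton] at h; subst h; exact absurd hv1 hbV1
      · intro v hv
        rw [Finset.mem_singleton] at hv; subst hv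
        exact Finset.mem_inter.mpr ⟨haV1, haM⟩
    have hX2 : Conc H ⟨V₂, E₂, V₂ ∩ H.marked⟩ c := by
      refine ⟨⟨⟨c, hcV2⟩, fun f hf => ⟨(hfe2 f hf).1,
          Finset.card_pos.mp (by have := (hfe2 f hf).2; omega)⟩, Finset.inter_subset_left⟩,
        ⟨hV2.trans hsub.1, hE2.trans hsub.2.1, rfl⟩, hcV2,
        Or.inl ⟨b, L - 1, by omega, hp2 _, ?_⟩⟩
      apply Finset.Subset.antisymm
      · intro v hv
        obtain ⟨hv1, hv2⟩ := Finset.mem_inter.mp hv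
        have : v ∈ N.marked := by rw [hmkN]; exact Finset.mem_inter.mpr ⟨hV2 hv1, hv2⟩
        rw [hmk] at this
        rcases Finset.mem_insert.mp this with rfl | h
        · exact absurd hv1 haV2
        · exact h
      · intro v hv
        rw [Finset.mem_singleton] at hv; subst hv
        exact Finset.mem_inter.mpr ⟨hbV2, hbM⟩
    rw [Set.eq_empty_iff_forall_notMem]
    intro v hv
    obtain ⟨hvv, hvm, hall⟩ := hv
    have h1 := hall _ (xFam_iff.mpr hX1)
    have h2 := hall _ (xFam_iff.mpr hX2)
    apply hvm
    show v ∈ insert c H.marked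
    rw [hkey v h1 h2]
    exact Finset.mem_insert_self c _
  · obtain ⟨L, hcyc, hmk⟩ := hNeck
    have hmkN : C.marked = C.verts ∩ H.marked := hsub.2.2
    have hav := cycle_endpoints hcyc
    have haM : a ∈ H.marked := by
      have : a ∈ C.marked := hmk ▸ Finset.mem_singleton_self a
      rw [hmkN] at this
      exact (Finset.mem_inter.mp this).2
    have hL2 : 2 ≤ L := hcyc.1
    obtain ⟨c, V₁, V₂, E₁, E₂, hca, hcV, hp1, hp2, hE1, hE2, hV1, hV2, hfe1, hfe2,
      haV1, haV2, hcV1, hcV2, hkey⟩ := split_cycle hcyc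
    have hcM : c ∉ H.marked := by
      intro hcM
      have : c ∈ C.marked := by rw [hmkN]; exact Finset.mem_inter.mpr ⟨hcV, hcM⟩
      rw [hmk, Finset.mem_singleton] at this
      exact hca this
    refine ⟨c, Finset.mem_sdiff.mpr ⟨hsub.1 hcV, hcM⟩, ?_⟩
    have hmk1 : ∀ (W : Finset V), W ⊆ C.verts → a ∈ W → W ∩ H.marked = {a} := by
      intro W hW haW
      apply Finset.Subset.antisymm
      · intro v hv
        obtain ⟨hv1, hv2⟩ := Finset.mem_inter.mp hv
        have : v ∈ C.marked := by rw [hmkN]; exact Finset.mem_inter.mpr ⟨hW hv1, hv2⟩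
        rw [hmk] at this
        exact this
      · intro v hv
        rw [Finset.mem_singleton] at hv; subst hv
        exact Finset.mem_inter.mpr ⟨haW, haM⟩
    have hX1 : Conc H ⟨V₁, E₁, V₁ ∩ H.marked⟩ c := by
      refine ⟨⟨⟨c, hcV1⟩, fun f hf => ⟨(hfe1 f hf).1,
          Finset.card_pos.mp (by have := (hfe1 f hf).2; omega)⟩, Finset.inter_subset_left⟩,
        ⟨hV1.trans hsub.1, hE1.trans hsub.2.1, rfl⟩, hcV1,
        Or.inl ⟨a, 1, le_refl 1, hp1 _, hmk1 V₁ hV1 haV1⟩⟩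
    have hX2 : Conc H ⟨V₂, E₂, V₂ ∩ H.marked⟩ c := by
      refine ⟨⟨⟨c, hcV2⟩, fun f hf => ⟨(hfe2 f hf).1,
          Finset.card_pos.mp (by have := (hfe2 f hf).2; omega)⟩, Finset.inter_subset_left⟩,
        ⟨hV2.trans hsub.1, hE2.trans hsub.2.1, rfl⟩, hcV2,
        Or.inl ⟨a, L - 1, by omega, hp2 _, hmk1 V₂ hV2 haV2⟩⟩
    rw [Set.eq_empty_iff_forall_notMem]
    intro v hv
    obtain ⟨hvv, hvm, hall⟩ := hv
    have h1 := hall _ (xFam_iff.mpr hX1)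
    have h2 := hall _ (xFam_iff.mpr hX2)
    apply hvm
    show v ∈ insert c H.marked
    rcases hkey v h1 h2 with rfl | rfl
    · exact Finset.mem_insert_self _ _
    · exact Finset.mem_insert_of_mem haM

lemma winPattern_Wk : ∀ (k : ℕ) (H' : MarkedHypergraph V), WinPattern H' →
    2 * k ≤ (H'.verts \ H'.marked).card → Wk k H' := by
  intro k
  induction k with
  | zero => exact fun H' hpat _ => hpat
  | succ k ih =>
    intro H' hpat hcard
    rcases hpat with ⟨e, he, hesub⟩ | ⟨N, hsub, hNun⟩ | ⟨C, a, hsub, hNeck⟩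
    · obtain ⟨x₀, hx₀⟩ := Finset.card_pos.mp (show 0 < (H'.verts \ H'.marked).card by omega)
      refine ⟨x₀, hx₀, fun y hy => ?_⟩
      obtain ⟨hyf, hyx⟩ := (free_plus_iff H' x₀ y).mp hy
      refine ih _ ?_ (by rw [card_free_pm H' hx₀ hyf hyx]; omega)
      left
      have hye : y ∉ e := fun hh => (Finset.mem_sdiff.mp hyf).2 (hesub hh)
      refine ⟨e, Finset.mem_filter.mpr ⟨he, hye⟩, fun v hv => ?_⟩
      show v ∈ (insert x₀ H'.marked).erase y
      exact Finset.mem_erase.mpr ⟨fun hh => hye (hh ▸ hv), Finset.mem_insert_of_mem (hesub hv)⟩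
    · obtain ⟨a, b, L, hL, hpath, hmk⟩ := hNun
      have hmkN : N.marked = N.verts ∩ H'.marked := hsub.2.2
      have hav := (path_endpoints hpath).1
      have hbv := (path_endpoints hpath).2
      have haM : a ∈ H'.marked := by
        have : a ∈ N.marked := hmk ▸ Finset.mem_insert_self a _
        rw [hmkN] at this
        exact (Finset.mem_inter.mp this).2
      have hbM : b ∈ H'.marked := by
        have : b ∈ N.marked := hmk ▸ Finset.mem_insert_of_mem (Finset.mem_singleton_self b)
        rw [hmkN] at this
        exact (Finset.mem_inter.mp this).2
      rcases Nat.lt_or_ge L 2 with hL1 | hL2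
      · have hLeq : L = 1 := by omega
        subst hLeq
        rcases hpath with ⟨h0, -, -, -⟩ | ⟨-, hab, e, hE, hV, h3, -, ha, hb, -⟩
        · omega
        have hb0 : b ∈ e 0 := hb
        have habsub : ({a, b} : Finset V) ⊆ e 0 := by
          intro v hv
          rcases Finset.mem_insert.mp hv with rfl | hv
          · exact ha
          · rw [Finset.mem_singleton] at hv; subst hv; exact hb0
        have hcard1 : (e 0 \ ({a, b} : Finset V)).card = 1 := by
          rw [Finset.card_sdiff_of_subset habsub, h3 0 (by omega), Finset.card_pair hab]
        obtain ⟨u, hu⟩ := Finset.card_eq_one.mp hcard1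
        have hue : u ∈ e 0 := (Finset.mem_sdiff.mp (hu ▸ Finset.mem_singleton_self u)).1
        have hunab : u ∉ ({a, b} : Finset V) :=
          (Finset.mem_sdiff.mp (hu ▸ Finset.mem_singleton_self u)).2
        have he0N : e 0 ⊆ N.verts := by
          intro v hv
          rw [hV]
          exact Finset.mem_biUnion.mpr ⟨0, Finset.mem_range.mpr (by omega), hv⟩
        have he0H : e 0 ∈ H'.edges := hsub.2.1
          (by rw [hE]; exact Finset.mem_image_of_mem e (Finset.mem_range.mpr (by omega)))
        have huM : u ∉ H'.marked := by
          intro hc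
          have : u ∈ N.marked := by rw [hmkN]; exact Finset.mem_inter.mpr ⟨he0N hue, hc⟩
          rw [hmk] at this
          exact hunab this
        have hufree : u ∈ H'.verts \ H'.marked := Finset.mem_sdiff.mpr ⟨hsub.1 (he0N hue), huM⟩
        refine ⟨u, hufree, fun y hy => ?_⟩
        obtain ⟨hyf, hyu⟩ := (free_plus_iff H' u y).mp hy
        refine ih _ ?_ (by rw [card_free_pm H' hufree hyf hyu]; omega)
        left
        have hsubm : e 0 ⊆ insert u H'.marked := by
          intro v hv
          by_cases hva : v ∈ ({a, b} : Finset V)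
          · rcases Finset.mem_insert.mp hva with rfl | hva
            · exact Finset.mem_insert_of_mem haM
            · rw [Finset.mem_singleton] at hva; subst hva
              exact Finset.mem_insert_of_mem hbM
          · have : v ∈ e 0 \ ({a, b} : Finset V) := Finset.mem_sdiff.mpr ⟨hv, hva⟩
            rw [hu, Finset.mem_singleton] at this
            subst this
            exact Finset.mem_insert_self _ _
        have hye : y ∉ e 0 := fun hh => (Finset.mem_sdiff.mp hy).2 (hsubm hh)
        refine ⟨e 0, Finset.mem_filter.mpr ⟨he0H, hye⟩, fun v hv => ?_⟩
        show v ∈ (insert u H'.marked).erase y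
        exact Finset.mem_erase.mpr ⟨fun hh => hye (hh ▸ hv), hsubm hv⟩
      · obtain ⟨c, V₁, V₂, E₁, E₂, hca, hcb, hcV, hp1, hp2, hE1, hE2, hV1, hV2, hfe1, hfe2,
          haV1, hbV2, hcV1, hcV2, haV2, hbV1, hkey⟩ := split_path hpath hL2
        have hcM : c ∉ H'.marked := by
          intro hcM
          have : c ∈ N.marked := by rw [hmkN]; exact Finset.mem_inter.mpr ⟨hcV, hcM⟩
          rw [hmk] at this
          rcases Finset.mem_insert.mp this with h | h
          · exact hca h
          · rw [Finset.mem_singleton] at h; exact hcb h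
        have hcfree : c ∈ H'.verts \ H'.marked := Finset.mem_sdiff.mpr ⟨hsub.1 hcV, hcM⟩
        refine ⟨c, hcfree, fun y hy => ?_⟩
        obtain ⟨hyf, hyc⟩ := (free_plus_iff H' c y).mp hy
        have hyM : y ∉ H'.marked := (Finset.mem_sdiff.mp hyf).2
        refine ih _ ?_ (by rw [card_free_pm H' hcfree hyf hyc]; omega)
        right; left
        by_cases hyV1 : y ∈ V₁
        · have hyV2 : y ∉ V₂ := fun h2 => hyc (hkey y hyV1 h2)
          refine ⟨⟨V₂, E₂, V₂ ∩ ((H'.plus c).minus y).marked⟩, ⟨?_, ?_, rfl⟩,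
            c, b, L - 1, by omega, hp2 _, ?_⟩
          · intro v hv
            exact Finset.mem_erase.mpr ⟨fun hh => hyV2 (hh ▸ hv), hsub.1 (hV2 hv)⟩
          · intro f hf
            exact Finset.mem_filter.mpr ⟨hsub.2.1 (hE2 hf), fun hh => hyV2 ((hfe2 f hf).1 hh)⟩
          · apply Finset.Subset.antisymm
            · intro v hv
              obtain ⟨hv2, hvm⟩ := Finset.mem_inter.mp hv
              have hvm' : v ∈ (insert c H'.marked).erase y := hvm
              rcases Finset.mem_insert.mp (Finset.mem_erase.mp hvm').2 with rfl | hvM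
              · exact Finset.mem_insert_self _ _
              · have : v ∈ N.marked := by rw [hmkN]; exact Finset.mem_inter.mpr ⟨hV2 hv2, hvM⟩
                rw [hmk] at this
                rcases Finset.mem_insert.mp this with rfl | h
                · exact absurd hv2 haV2
                · exact Finset.mem_insert_of_mem h
            · intro v hv
              rcases Finset.mem_insert.mp hv with rfl | hv
              · refine Finset.mem_inter.mpr ⟨hcV2, ?_⟩
                show v ∈ (insert v H'.marked).erase y
                exact Finset.mem_erase.mpr ⟨Ne.symm hyc, Finset.mem_insert_self _ _⟩
              · rw [Finset.mem_singleton] at hv; subst hv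
                refine Finset.mem_inter.mpr ⟨hbV2, ?_⟩
                show v ∈ (insert c H'.marked).erase y
                exact Finset.mem_erase.mpr ⟨fun hh => hyM (hh ▸ hbM), Finset.mem_insert_of_mem hbM⟩
        · refine ⟨⟨V₁, E₁, V₁ ∩ ((H'.plus c).minus y).marked⟩, ⟨?_, ?_, rfl⟩,
            a, c, 1, le_refl 1, pathlen_rev (hp1 _), ?_⟩
          · intro v hv
            exact Finset.mem_erase.mpr ⟨fun hh => hyV1 (hh ▸ hv), hsub.1 (hV1 hv)⟩
          · intro f hf
            exact Finset.mem_filter.mpr ⟨hsub.2.1 (hE1 hf), fun hh => hyV1 ((hfe1 f hf).1 hh)⟩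
          · apply Finset.Subset.antisymm
            · intro v hv
              obtain ⟨hv1, hvm⟩ := Finset.mem_inter.mp hv
              have hvm' : v ∈ (insert c H'.marked).erase y := hvm
              rcases Finset.mem_insert.mp (Finset.mem_erase.mp hvm').2 with rfl | hvM
              · exact Finset.mem_insert_of_mem (Finset.mem_singleton_self _)
              · have : v ∈ N.marked := by rw [hmkN]; exact Finset.mem_inter.mpr ⟨hV1 hv1, hvM⟩
                rw [hmk] at this
                rcases Finset.mem_insert.mp this with rfl | h
                · exact Finset.mem_insert_self _ _
                · rw [Finset.mem_singleton] at h; subst h; exact absurd hv1 hbV1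
            · intro v hv
              rcases Finset.mem_insert.mp hv with rfl | hv
              · refine Finset.mem_inter.mpr ⟨haV1, ?_⟩
                show v ∈ (insert c H'.marked).erase y
                exact Finset.mem_erase.mpr ⟨fun hh => hyM (hh ▸ haM), Finset.mem_insert_of_mem haM⟩
              · rw [Finset.mem_singleton] at hv; subst hv
                refine Finset.mem_inter.mpr ⟨hcV1, ?_⟩
                show v ∈ (insert v H'.marked).erase y
                exact Finset.mem_erase.mpr ⟨Ne.symm hyc, Finset.mem_insert_self _ _⟩
    · obtain ⟨L, hcyc, hmk⟩ := hNeck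
      have hmkN : C.marked = C.verts ∩ H'.marked := hsub.2.2
      have hav := cycle_endpoints hcyc
      have haM : a ∈ H'.marked := by
        have : a ∈ C.marked := hmk ▸ Finset.mem_singleton_self a
        rw [hmkN] at this
        exact (Finset.mem_inter.mp this).2
      have hL2 : 2 ≤ L := hcyc.1
      obtain ⟨c, V₁, V₂, E₁, E₂, hca, hcV, hp1, hp2, hE1, hE2, hV1, hV2, hfe1, hfe2,
        haV1, haV2, hcV1, hcV2, hkey⟩ := split_cycle hcyc
      have hcM : c ∉ H'.marked := by
        intro hcM
        have : c ∈ C.marked := by rw [hmkN]; exact Finset.mem_inter.mpr ⟨hcV, hcM⟩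
        rw [hmk, Finset.mem_singleton] at this
        exact hca this
      have hcfree : c ∈ H'.verts \ H'.marked := Finset.mem_sdiff.mpr ⟨hsub.1 hcV, hcM⟩
      refine ⟨c, hcfree, fun y hy => ?_⟩
      obtain ⟨hyf, hyc⟩ := (free_plus_iff H' c y).mp hy
      have hyM : y ∉ H'.marked := (Finset.mem_sdiff.mp hyf).2
      refine ih _ ?_ (by rw [card_free_pm H' hcfree hyf hyc]; omega)
      right; left
      by_cases hyV1 : y ∈ V₁
      · have hyV2 : y ∉ V₂ := fun h2 =>
          (hkey y hyV1 h2).elim (fun hh => hyc hh) (fun hh => hyM (hh ▸ haM))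
        refine ⟨⟨V₂, E₂, V₂ ∩ ((H'.plus c).minus y).marked⟩, ⟨?_, ?_, rfl⟩,
          c, a, L - 1, by omega, hp2 _, ?_⟩
        · intro v hv
          exact Finset.mem_erase.mpr ⟨fun hh => hyV2 (hh ▸ hv), hsub.1 (hV2 hv)⟩
        · intro f hf
          exact Finset.mem_filter.mpr ⟨hsub.2.1 (hE2 hf), fun hh => hyV2 ((hfe2 f hf).1 hh)⟩
        · apply Finset.Subset.antisymm
          · intro v hv
            obtain ⟨hv2, hvm⟩ := Finset.mem_inter.mp hv
            have hvm' : v ∈ (insert c H'.marked).erase y := hvm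
            rcases Finset.mem_insert.mp (Finset.mem_erase.mp hvm').2 with rfl | hvM
            · exact Finset.mem_insert_self _ _
            · have : v ∈ C.marked := by rw [hmkN]; exact Finset.mem_inter.mpr ⟨hV2 hv2, hvM⟩
              rw [hmk] at this
              exact Finset.mem_insert_of_mem this
          · intro v hv
            rcases Finset.mem_insert.mp hv with rfl | hv
            · refine Finset.mem_inter.mpr ⟨hcV2, ?_⟩
              show v ∈ (insert v H'.marked).erase y
              exact Finset.mem_erase.mpr ⟨Ne.symm hyc, Finset.mem_insert_self _ _⟩
            · rw [Finset.mem_singleton] at hv; subst hv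
              refine Finset.mem_inter.mpr ⟨haV2, ?_⟩
              show v ∈ (insert c H'.marked).erase y
              exact Finset.mem_erase.mpr ⟨fun hh => hyM (hh ▸ haM), Finset.mem_insert_of_mem haM⟩
      · refine ⟨⟨V₁, E₁, V₁ ∩ ((H'.plus c).minus y).marked⟩, ⟨?_, ?_, rfl⟩,
          a, c, 1, le_refl 1, pathlen_rev (hp1 _), ?_⟩
        · intro v hv
          exact Finset.mem_erase.mpr ⟨fun hh => hyV1 (hh ▸ hv), hsub.1 (hV1 hv)⟩
        · intro f hf
          exact Finset.mem_filter.mpr ⟨hsub.2.1 (hE1 hf), fun hh => hyV1 ((hfe1 f hf).1 hh)⟩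
        · apply Finset.Subset.antisymm
          · intro v hv
            obtain ⟨hv1, hvm⟩ := Finset.mem_inter.mp hv
            have hvm' : v ∈ (insert c H'.marked).erase y := hvm
            rcases Finset.mem_insert.mp (Finset.mem_erase.mp hvm').2 with rfl | hvM
            · exact Finset.mem_insert_of_mem (Finset.mem_singleton_self _)
            · have : v ∈ C.marked := by rw [hmkN]; exact Finset.mem_inter.mpr ⟨hV1 hv1, hvM⟩
              rw [hmk] at this
              rw [Finset.mem_singleton] at this; subst this
              exact Finset.mem_insert_self _ _
          · intro v hv
            rcases Finset.mem_insert.mp hv with rfl | hv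
            · refine Finset.mem_inter.mpr ⟨haV1, ?_⟩
              show v ∈ (insert c H'.marked).erase y
              exact Finset.mem_erase.mpr ⟨fun hh => hyM (hh ▸ haM), Finset.mem_insert_of_mem haM⟩
            · rw [Finset.mem_singleton] at hv; subst hv
              refine Finset.mem_inter.mpr ⟨hcV1, ?_⟩
              show v ∈ (insert v H'.marked).erase y
              exact Finset.mem_erase.mpr ⟨Ne.symm hyc, Finset.mem_insert_self _ _⟩

lemma notJ_of_inter_empty {H : MarkedHypergraph V} {x : V} (hx : x ∈ H.verts \ H.marked)
    (hint : inter (H.plus x) (xFam famD0 H x) = ∅) {r : ℕ} (hr : 1 ≤ r) :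
    ¬ J famD0 r H := by
  cases r with
  | zero => omega
  | succ n =>
    intro hJ
    obtain ⟨y, hy, -⟩ := hJ x hx
    rw [hint] at hy
    exact Set.notMem_empty y hy

lemma main_iff : ∀ r : ℕ, 1 ≤ r → ∀ H : MarkedHypergraph V, H.IsValid → H.IsUniform 3 →
    ¬ H.TrivialMakerWin → 2 * r ≤ (H.verts \ H.marked).card →
    (¬ J famD0 r H ↔ Wk r H) := by
  intro r hr
  induction r, hr using Nat.le_induction with
  | base =>
    intro H hval hunif hnt hcard
    constructor
    · intro hnJ
      have hnJ' : ¬ ∀ x ∈ H.verts \ H.marked,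
          ∃ y ∈ inter (H.plus x) (xFam famD0 H x), J famD0 0 ((H.plus x).minus y) := hnJ
      push_neg at hnJ'
      obtain ⟨x, hx, hempty⟩ := hnJ'
      refine ⟨x, hx, fun y hy => ?_⟩
      have hyni : y ∉ inter (H.plus x) (xFam famD0 H x) := fun hmem =>
        hempty y hmem (trivial : J famD0 0 ((H.plus x).minus y))
      have hex : ∃ X ∈ xFam famD0 H x, y ∉ X.verts := by
        by_contra hno
        push_neg at hno
        exact hyni ⟨(Finset.mem_sdiff.mp hy).1, (Finset.mem_sdiff.mp hy).2,
          fun X hX => hno X hX⟩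
      obtain ⟨X, hX, hyX⟩ := hex
      exact danger_to_pattern hx (xFam_iff.mp hX) hyX
    · intro hW
      obtain ⟨x, hx, hall⟩ := hW
      by_cases hpat : HasPat H
      · obtain ⟨x', hx', hint⟩ := caseB hnt hpat
        exact notJ_of_inter_empty hx' hint (le_refl 1)
      · refine notJ_of_inter_empty hx ?_ (le_refl 1)
        rw [Set.eq_empty_iff_forall_notMem]
        intro y hy
        have hyf : y ∈ (H.plus x).verts \ (H.plus x).marked :=
          Finset.mem_sdiff.mpr ⟨hy.1, hy.2.1⟩
        have hWp : WinPattern ((H.plus x).minus y) := hall y hyf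
        rcases pattern_cases hnt hx hyf hWp with ⟨X, hXc, hyX⟩ | hp
        · exact hyX (hy.2.2 X (xFam_iff.mpr hXc))
        · exact hpat hp
  | succ r hr ih =>
    intro H hval hunif hnt hcard
    constructor
    · intro hnJ
      have hnJ' : ¬ ∀ x ∈ H.verts \ H.marked,
          ∃ y ∈ inter (H.plus x) (xFam famD0 H x), J famD0 r ((H.plus x).minus y) := hnJ
      push_neg at hnJ'
      obtain ⟨x, hx, hall⟩ := hnJ'
      refine ⟨x, hx, fun y hy => ?_⟩
      obtain ⟨hyf, hyx⟩ := (free_plus_iff H x y).mp hy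
      have hcard2 := card_free_pm H hx hyf hyx
      by_cases hyi : y ∈ inter (H.plus x) (xFam famD0 H x)
      · have hnt'' := not_triv_of_inter hval hunif hnt hx hyi
        exact (ih _ (valid_pm hval (Finset.mem_sdiff.mp hx).1 (Ne.symm hyx))
          (unif_pm hunif x y) hnt'' (by omega)).mp (hall y hyi)
      · have hex : ∃ X ∈ xFam famD0 H x, y ∉ X.verts := by
          by_contra hno
          push_neg at hno
          exact hyi ⟨(Finset.mem_sdiff.mp hy).1, (Finset.mem_sdiff.mp hy).2,
            fun X hX => hno X hX⟩
        obtain ⟨X, hX, hyX⟩ := hex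
        exact winPattern_Wk r _ (danger_to_pattern hx (xFam_iff.mp hX) hyX) (by omega)
    · intro hW
      obtain ⟨x, hx, hall⟩ := hW
      intro hJ
      obtain ⟨y, hyi, hJ''⟩ := hJ x hx
      have hyf : y ∈ (H.plus x).verts \ (H.plus x).marked :=
        Finset.mem_sdiff.mpr ⟨hyi.1, hyi.2.1⟩
      obtain ⟨hyfH, hyx⟩ := (free_plus_iff H x y).mp hyf
      have hcard2 := card_free_pm H hx hyfH hyx
      have hnt'' := not_triv_of_inter hval hunif hnt hx hyi
      exact (ih _ (valid_pm hval (Finset.mem_sdiff.mp hx).1 (Ne.symm hyx))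
        (unif_pm hunif x y) hnt'' (by omega)).mpr (hall y hyf) hJ''

end MB

-- AUX END

/-- Proposition 3.16: `J_r(𝒟₀,H)` fails iff Maker can force a fully marked edge,
a nunchaku or a necklace within `r` rounds. -/
theorem statement18 {V : Type} [DecidableEq V] (r : ℕ) (hr : 1 ≤ r)
    (H : MB.MarkedHypergraph V) (hval : H.IsValid) (hunif : H.IsUniform 3)
    (hnt : ¬ H.TrivialMakerWin) (hcard : 2 * r ≤ (H.verts \ H.marked).card) :
    ¬ MB.J MB.famD0 r H ↔ MB.Wk r H := by
  exact MB.main_iff r hr H hval hunif hnt hcard
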